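/- arXiv:1908.07015 — 2 statements merged into one kernel-verified Lean document; each statement's English description precedes it below -/
import Mathlib

section
/- If J and K are digital Jordan curves in the Khalimsky plane with K ⊆ J ∪ int(J), then int(K) ⊆ int(J). -/
open Set

/-- The minimal open neighborhood of a point in a topological space. -/
def minOpenNhd {X : Type*} (t : TopologicalSpace X) (x : X) : Set X :=
  ⋂₀ {U : Set X | t.IsOpen U ∧ x ∈ U}

/-- The specialization-style preorder: `x ≤ y` iff `U_x ⊆ U_y`. -/
def specLE {X : Type*} (t : TopologicalSpace X) (x y : X) : Prop :=
  minOpenNhd t x ⊆ minOpenNhd t y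

/-- Two points are adjacent if distinct and comparable in the specialization order. -/
def Adjacent {X : Type*} (t : TopologicalSpace X) (x y : X) : Prop :=
  x ≠ y ∧ (specLE t x y ∨ specLE t y x)

/-- The adjacency set of a point. -/
def adjSet {X : Type*} (t : TopologicalSpace X) (x : X) : Set X := {y | Adjacent t x y}

/-- A COTS: a connected space in which every 3-point subset has a point separating
the other two. -/
def IsCOTS {X : Type*} (t : TopologicalSpace X) : Prop :=
  @ConnectedSpace X t ∧
    ∀ Y : Set X, Y.ncard = 3 →
      ∃ y ∈ Y, ∃ a ∈ Y \ {y}, ∃ b ∈ Y \ {y},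
        @connectedComponentIn X t {y}ᶜ a ≠ @connectedComponentIn X t {y}ᶜ b

/-- An endpoint of a COTS: a point with at most one neighbor. -/
def IsEndpoint {X : Type*} (t : TopologicalSpace X) (x : X) : Prop :=
  (adjSet t x).ncard ≤ 1

/-- A COTS-path: the continuous image of a finite COTS. -/
def IsCOTSPath {Y : Type*} (tY : TopologicalSpace Y) (P : Set Y) : Prop :=
  ∃ (C : Type) (tC : TopologicalSpace C), Finite C ∧ IsCOTS tC ∧
    ∃ f : C → Y, @Continuous C Y tC tY f ∧ Set.range f = P

/-- A COTS-path with prescribed start and end points. -/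
def IsCOTSPathFromTo {Y : Type*} (tY : TopologicalSpace Y) (P : Set Y) (a b : Y) : Prop :=
  ∃ (C : Type) (tC : TopologicalSpace C), Finite C ∧ IsCOTS tC ∧
    ∃ f : C → Y, @Continuous C Y tC tY f ∧ Set.range f = P ∧
      ∃ c₀ c₁ : C, IsEndpoint tC c₀ ∧ IsEndpoint tC c₁ ∧ f c₀ = a ∧ f c₁ = b

/-- A COTS-arc: the homeomorphic image of a finite COTS. -/
def IsCOTSArc {Y : Type*} (tY : TopologicalSpace Y) (A : Set Y) : Prop :=
  ∃ (C : Type) (tC : TopologicalSpace C), Finite C ∧ IsCOTS tC ∧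
    ∃ f : C → Y, @Topology.IsEmbedding C Y tC tY f ∧ Set.range f = A

/-- A COTS-arc with prescribed endpoints. -/
def IsCOTSArcFromTo {Y : Type*} (tY : TopologicalSpace Y) (A : Set Y) (a b : Y) : Prop :=
  ∃ (C : Type) (tC : TopologicalSpace C), Finite C ∧ IsCOTS tC ∧
    ∃ f : C → Y, @Topology.IsEmbedding C Y tC tY f ∧ Set.range f = A ∧
      ∃ c₀ c₁ : C, IsEndpoint tC c₀ ∧ IsEndpoint tC c₁ ∧ f c₀ = a ∧ f c₁ = b

/-- The COTS-distance: one less than the minimal cardinality of a COTS-arc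
joining two points (`⊤` if there is no such arc). -/
noncomputable def cotsDist {X : Type*} (t : TopologicalSpace X) (x y : X) : ℕ∞ :=
  sInf {n : ℕ∞ | ∃ A : Set X, IsCOTSArcFromTo t A x y ∧ (A.ncard : ℕ∞) = n + 1}

/-- The Khalimsky topology on ℤ. -/
def khal : TopologicalSpace ℤ :=
  TopologicalSpace.generateFrom
    {s : Set ℤ | ∃ n : ℤ, (Odd n ∧ s = {n}) ∨ (Even n ∧ s = {n - 1, n, n + 1})}

/-- The Khalimsky plane topology on ℤ × ℤ. -/
def khalPlane : TopologicalSpace (ℤ × ℤ) := @instTopologicalSpaceProd ℤ ℤ khal khal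

/-- A point of the Khalimsky plane is pure if its coordinates have the same parity. -/
def IsPurePt (p : ℤ × ℤ) : Prop := (Even p.1 ∧ Even p.2) ∨ (Odd p.1 ∧ Odd p.2)

/-- A digital Jordan curve: a finite set of at least 4 points such that removing
any point leaves a COTS-arc. -/
def IsJordanCurve {X : Type*} (t : TopologicalSpace X) (J : Set X) : Prop :=
  J.Finite ∧ 4 ≤ J.ncard ∧ ∀ j ∈ J, IsCOTSArc t (J \ {j})

/-- The interior of a digital Jordan curve in the Khalimsky plane: the union of the
finite (bounded) connected components of its complement. -/
def jInterior (J : Set (ℤ × ℤ)) : Set (ℤ × ℤ) :=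
  ⋃₀ {S | ∃ p ∉ J, S = @connectedComponentIn _ khalPlane Jᶜ p ∧ S.Finite}

namespace S17

attribute [local instance 2000] khal khalPlane

/-- minimal interval around `m`. -/
def kint (m : ℤ) : Set ℤ := if Odd m then {m} else {m - 1, m, m + 1}

lemma mem_kint {x m : ℤ} :
    x ∈ kint m ↔ ((m % 2 = 1 ∧ x = m) ∨ (m % 2 = 0 ∧ (x = m - 1 ∨ x = m ∨ x = m + 1))) := by
  unfold kint
  split <;> rename_i h
  · rw [Int.odd_iff] at h; simp [h]
  · rw [Int.not_odd_iff_even, Int.even_iff] at h; simp [h]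

lemma self_mem_kint (m : ℤ) : m ∈ kint m := by
  rw [mem_kint]; omega

lemma isOpen_kint (m : ℤ) : IsOpen (kint m) := by
  show TopologicalSpace.GenerateOpen _ (kint m)
  unfold kint
  split <;> rename_i h
  · exact .basic _ ⟨m, Or.inl ⟨h, rfl⟩⟩
  · exact .basic _ ⟨m, Or.inr ⟨Int.not_odd_iff_even.mp h, rfl⟩⟩

lemma kint_subset {V : Set ℤ} (hV : IsOpen V) : ∀ m ∈ V, kint m ⊆ V := by
  have hV' : TopologicalSpace.GenerateOpen
      {s : Set ℤ | ∃ n : ℤ, (Odd n ∧ s = {n}) ∨ (Even n ∧ s = {n - 1, n, n + 1})} V := hV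
  clear hV
  induction hV' with
  | basic s hs =>
      obtain ⟨n, h | h⟩ := hs
      · obtain ⟨hn, rfl⟩ := h
        intro m hm x hx
        simp only [mem_singleton_iff] at hm; subst hm
        rw [mem_kint] at hx
        rw [Int.odd_iff] at hn
        simp only [mem_singleton_iff]; omega
      · obtain ⟨hn, rfl⟩ := h
        intro m hm x hx
        rw [Int.even_iff] at hn
        simp only [mem_insert_iff, mem_singleton_iff] at hm ⊢
        rw [mem_kint] at hx
        omega
  | univ => intro m _; exact fun x _ => trivial
  | inter s t _ _ ihs iht => intro m hm; exact subset_inter ((ihs m hm.1)) ((iht m hm.2))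
  | sUnion S _ ih =>
      rintro m ⟨s, hsS, hms⟩
      exact (ih s hsS m hms).trans (subset_sUnion_of_mem hsS)

/-- minimal open box around `p` in the Khalimsky plane. -/
def kNhd (p : ℤ × ℤ) : Set (ℤ × ℤ) := kint p.1 ×ˢ kint p.2

lemma mem_kNhd {q p : ℤ × ℤ} : q ∈ kNhd p ↔ q.1 ∈ kint p.1 ∧ q.2 ∈ kint p.2 := Iff.rfl

lemma isOpen_kNhd (p : ℤ × ℤ) : IsOpen (kNhd p) :=
  (isOpen_kint p.1).prod (isOpen_kint p.2)

lemma self_mem_kNhd (p : ℤ × ℤ) : p ∈ kNhd p :=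
  ⟨self_mem_kint p.1, self_mem_kint p.2⟩

lemma kNhd_subset {U : Set (ℤ × ℤ)} (hU : IsOpen U) {p : ℤ × ℤ} (hp : p ∈ U) :
    kNhd p ⊆ U := by
  obtain ⟨u, v, hu, hv, h1, h2, huv⟩ := isOpen_prod_iff.mp hU p.1 p.2 (by simpa using hp)
  refine subset_trans ?_ huv
  exact Set.prod_mono (kint_subset hu p.1 h1) (kint_subset hv p.2 h2)

/-- adjacency (in particular: topological connectedness of the pair). -/
def adjE (p q : ℤ × ℤ) : Prop := q ∈ kNhd p ∨ p ∈ kNhd q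

lemma adjE.symm {p q : ℤ × ℤ} (h : adjE p q) : adjE q p := h.elim Or.inr Or.inl

lemma preconn_pair_aux {p q : ℤ × ℤ} (h : q ∈ kNhd p) : IsPreconnected {p, q} := by
  intro u v hu hv hcov hu' hv'
  have hpcov : p ∈ u ∨ p ∈ v := by
    have := hcov (mem_insert p {q}); exact this
  rcases hpcov with hpu | hpv
  · have hq : q ∈ u := kNhd_subset hu hpu h
    obtain ⟨b, hb, hbv⟩ := hv'
    rcases hb with rfl | hb
    · exact ⟨b, Or.inl rfl, hpu, hbv⟩
    · simp only [mem_singleton_iff] at hb; subst hb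
      exact ⟨b, Or.inr rfl, hq, hbv⟩
  · have hq : q ∈ v := kNhd_subset hv hpv h
    obtain ⟨a, ha, hau⟩ := hu'
    rcases ha with rfl | ha
    · exact ⟨a, Or.inl rfl, hau, hpv⟩
    · simp only [mem_singleton_iff] at ha; subst ha
      exact ⟨a, Or.inr rfl, hau, hq⟩

lemma preconn_pair {p q : ℤ × ℤ} (h : adjE p q) : IsPreconnected {p, q} := by
  rcases h with h | h
  · exact preconn_pair_aux h
  · rw [Set.pair_comm]; exact preconn_pair_aux h

lemma adjE_of_preconn {p q : ℤ × ℤ} (hne : p ≠ q) (h : IsPreconnected {p, q}) : adjE p q := by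
  by_contra hadj
  rw [adjE] at hadj; push_neg at hadj
  obtain ⟨h1, h2⟩ := hadj
  obtain ⟨y, hy, hyu, hyv⟩ := h (kNhd p) (kNhd q) (isOpen_kNhd p) (isOpen_kNhd q)
    (by rintro z (rfl | hz)
        · exact Or.inl (self_mem_kNhd z)
        · simp only [mem_singleton_iff] at hz; subst hz; exact Or.inr (self_mem_kNhd z))
    ⟨p, Or.inl rfl, self_mem_kNhd p⟩ ⟨q, Or.inr rfl, self_mem_kNhd q⟩
  rcases hy with rfl | hy
  · exact h2 hyv
  · simp only [mem_singleton_iff] at hy; subst hy; exact h1 hyu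

end S17
namespace S17

attribute [local instance 2000] khal khalPlane

lemma adjE_add_10 (p : ℤ × ℤ) : adjE p (p + (1, 0)) := by
  rcases Int.even_or_odd p.1 with h | h
  · left
    rw [Int.even_iff] at h
    constructor
    · show p.1 + 1 ∈ kint p.1; rw [mem_kint]; omega
    · show p.2 + 0 ∈ kint p.2; rw [mem_kint]; omega
  · right
    rw [Int.odd_iff] at h
    constructor
    · show p.1 ∈ kint (p.1 + 1); rw [mem_kint]; omega
    · show p.2 ∈ kint (p.2 + 0); rw [mem_kint]; omega

lemma adjE_add_01 (p : ℤ × ℤ) : adjE p (p + (0, 1)) := by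
  rcases Int.even_or_odd p.2 with h | h
  · left
    rw [Int.even_iff] at h
    constructor
    · show p.1 + 0 ∈ kint p.1; rw [mem_kint]; omega
    · show p.2 + 1 ∈ kint p.2; rw [mem_kint]; omega
  · right
    rw [Int.odd_iff] at h
    constructor
    · show p.1 ∈ kint (p.1 + 0); rw [mem_kint]; omega
    · show p.2 ∈ kint (p.2 + 1); rw [mem_kint]; omega

/-- points in the open box of an (even,even) point are adjacent to it. -/
lemma adjE_evenbox {q p : ℤ × ℤ} (h1 : q.1 % 2 = 0) (h2 : q.2 % 2 = 0)
    (b1 : q.1 - 1 ≤ p.1) (b2 : p.1 ≤ q.1 + 1) (b3 : q.2 - 1 ≤ p.2) (b4 : p.2 ≤ q.2 + 1) :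
    adjE q p := by
  left; rw [mem_kNhd, mem_kint, mem_kint]; omega

lemma ccIn_eq_of_adjE {J : Set (ℤ × ℤ)} {p q : ℤ × ℤ} (hp : p ∉ J) (hq : q ∉ J)
    (h : adjE p q) : connectedComponentIn Jᶜ p = connectedComponentIn Jᶜ q := by
  have hsub : ({p, q} : Set (ℤ × ℤ)) ⊆ Jᶜ := by
    rintro z (rfl | hz)
    · exact hp
    · simp only [Set.mem_singleton_iff] at hz; subst hz; exact hq
  have h2 := (preconn_pair h).subset_connectedComponentIn (Set.mem_insert p {q}) hsub
  exact connectedComponentIn_eq (h2 (Set.mem_insert_iff.mpr (Or.inr rfl)))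

lemma seg_preconn (c b : ℤ) : ∀ n : ℕ,
    IsPreconnected {q : ℤ × ℤ | q.1 = c ∧ b ≤ q.2 ∧ q.2 ≤ b + n} := by
  intro n
  induction n with
  | zero =>
      have hs : {q : ℤ × ℤ | q.1 = c ∧ b ≤ q.2 ∧ q.2 ≤ b + (0 : ℕ)} = {((c, b) : ℤ × ℤ)} := by
        ext ⟨x1, x2⟩; simp [Prod.ext_iff]; omega
      rw [hs]; exact isPreconnected_singleton
  | succ n ih =>
      have hpt : ((c, b + (n : ℤ)) + (0, 1)) = ((c, b + (n : ℤ) + 1) : ℤ × ℤ) := by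
        simp
      have hpair := preconn_pair (adjE_add_01 (c, b + (n : ℤ)))
      rw [hpt] at hpair
      have hmem1 : ((c, b + (n : ℤ)) : ℤ × ℤ) ∈ {q : ℤ × ℤ | q.1 = c ∧ b ≤ q.2 ∧ q.2 ≤ b + n} :=
        ⟨rfl, by omega, le_refl _⟩
      have hmem2 : ((c, b + (n : ℤ)) : ℤ × ℤ) ∈ ({(c, b + (n : ℤ)), (c, b + (n : ℤ) + 1)} : Set (ℤ × ℤ)) :=
        Set.mem_insert _ _
      have hu := IsPreconnected.union _ hmem1 hmem2 ih hpair
      have hset : {q : ℤ × ℤ | q.1 = c ∧ b ≤ q.2 ∧ q.2 ≤ b + ((n + 1 : ℕ) : ℤ)} =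
          {q : ℤ × ℤ | q.1 = c ∧ b ≤ q.2 ∧ q.2 ≤ b + (n : ℤ)} ∪
            ({(c, b + (n : ℤ)), (c, b + (n : ℤ) + 1)} : Set (ℤ × ℤ)) := by
        ext ⟨x1, x2⟩
        simp only [Set.mem_setOf_eq, Set.mem_union, Set.mem_insert_iff,
          Set.mem_singleton_iff, Prod.mk.injEq]
        push_cast
        constructor
        · rintro ⟨rfl, h2, h3⟩
          by_cases hx : x2 ≤ b + n
          · exact Or.inl ⟨rfl, h2, hx⟩
          · by_cases hx2 : x2 = b + n
            · exact Or.inr (Or.inl ⟨rfl, hx2⟩)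
            · exact Or.inr (Or.inr ⟨rfl, by omega⟩)
        · rintro (⟨rfl, h2, h3⟩ | ⟨rfl, rfl⟩ | ⟨rfl, rfl⟩) <;> refine ⟨rfl, by omega, by omega⟩
      rw [hset]; exact hu

lemma ray_preconn (c b : ℤ) : IsPreconnected {q : ℤ × ℤ | q.1 = c ∧ b ≤ q.2} := by
  apply isPreconnected_of_forall ((c, b) : ℤ × ℤ)
  intro y hy
  refine ⟨{q : ℤ × ℤ | q.1 = c ∧ b ≤ q.2 ∧ q.2 ≤ b + (y.2 - b).toNat}, ?_, ?_, ?_, seg_preconn c b _⟩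
  · intro z hz; exact ⟨hz.1, hz.2.1⟩
  · exact ⟨rfl, le_refl _, by omega⟩
  · refine ⟨hy.1, hy.2, ?_⟩
    have := hy.2; omega

lemma ray_infinite (c b : ℤ) : {q : ℤ × ℤ | q.1 = c ∧ b ≤ q.2}.Infinite := by
  refine Set.infinite_of_injective_forall_mem (f := fun k : ℕ => ((c, b + k) : ℤ × ℤ)) ?_ ?_
  · intro i j hij
    simp only [Prod.mk.injEq, true_and] at hij
    omega
  · intro k
    refine ⟨rfl, ?_⟩
    show b ≤ b + (k : ℤ); omega

end S17
namespace S17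

attribute [local instance 2000] khal khalPlane

section COTS

variable {C : Type} {tC : TopologicalSpace C}

/-- In a COTS, no point has three distinct neighbors. -/
lemma cots_no_deg3 (hC : IsCOTS tC) {y a b c : C}
    (hab : a ≠ b) (hac : a ≠ c) (hbc : b ≠ c) (hya : y ≠ a) (hyb : y ≠ b) (hyc : y ≠ c)
    (ha : @IsPreconnected C tC {y, a}) (hb : @IsPreconnected C tC {y, b})
    (hc : @IsPreconnected C tC {y, c}) : False := by
  letI := tC
  have hY : ({a, b, c} : Set C).ncard = 3 :=
    Set.ncard_eq_three.mpr ⟨a, b, c, hab, hac, hbc, rfl⟩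
  obtain ⟨y', hy'Y, x₁, hx₁, x₂, hx₂, hne⟩ := hC.2 {a, b, c} hY
  have hx12 : x₁ ≠ x₂ := fun h => hne (by rw [h])
  have hyY : y ∉ ({a, b, c} : Set C) := by
    simp only [Set.mem_insert_iff, Set.mem_singleton_iff]
    push_neg; exact ⟨hya, hyb, hyc⟩
  have hpre : ∀ x ∈ ({a, b, c} : Set C), IsPreconnected ({y, x} : Set C) := by
    rintro x (rfl | rfl | rfl)
    · exact ha
    · exact hb
    · exact hc
  have hU : IsPreconnected (({y, x₁} : Set C) ∪ {y, x₂}) :=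
    IsPreconnected.union y (Set.mem_insert _ _) (Set.mem_insert _ _)
      (hpre x₁ hx₁.1) (hpre x₂ hx₂.1)
  have hsub : (({y, x₁} : Set C) ∪ {y, x₂}) ⊆ ({y'}ᶜ : Set C) := by
    rintro z (hz | hz) <;> rcases hz with rfl | hz
    · exact fun hzy => hyY (hzy ▸ hy'Y)
    · simp only [Set.mem_singleton_iff] at hz; subst hz
      simpa using hx₁.2
    · exact fun hzy => hyY (hzy ▸ hy'Y)
    · simp only [Set.mem_singleton_iff] at hz; subst hz
      simpa using hx₂.2
  have h1 := hU.subset_connectedComponentIn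
    (Set.mem_union_left _ (Set.mem_insert_iff.mpr (Or.inr rfl))) hsub
  exact hne (connectedComponentIn_eq
    (h1 (Set.mem_union_right _ (Set.mem_insert_iff.mpr (Or.inr rfl)))))

/-- A COTS contains no triangle. -/
lemma cots_no_triangle (hC : IsCOTS tC) {a b c : C}
    (hab : a ≠ b) (hac : a ≠ c) (hbc : b ≠ c)
    (h1 : @IsPreconnected C tC {a, b}) (h2 : @IsPreconnected C tC {a, c})
    (h3 : @IsPreconnected C tC {b, c}) : False := by
  letI := tC
  have hY : ({a, b, c} : Set C).ncard = 3 :=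
    Set.ncard_eq_three.mpr ⟨a, b, c, hab, hac, hbc, rfl⟩
  obtain ⟨y', hy'Y, x₁, hx₁, x₂, hx₂, hne⟩ := hC.2 {a, b, c} hY
  have hx12 : x₁ ≠ x₂ := fun h => hne (by rw [h])
  have hpair : IsPreconnected ({x₁, x₂} : Set C) := by
    have hmem : ∀ z, z ∈ ({a, b, c} : Set C) → z = a ∨ z = b ∨ z = c := by
      rintro z (rfl | rfl | rfl) <;> tauto
    rcases hmem x₁ hx₁.1 with rfl | rfl | rfl <;>
      rcases hmem x₂ hx₂.1 with rfl | rfl | rfl <;>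
        first
          | exact absurd rfl hx12
          | assumption
          | (rw [Set.pair_comm]; assumption)
  have hsub : ({x₁, x₂} : Set C) ⊆ ({y'}ᶜ : Set C) := by
    rintro z (rfl | hz)
    · simpa using hx₁.2
    · simp only [Set.mem_singleton_iff] at hz; subst hz
      simpa using hx₂.2
  have h4 := hpair.subset_connectedComponentIn (Set.mem_insert _ _) hsub
  exact hne (connectedComponentIn_eq (h4 (by simp)))

end COTS

/-- Transfer: an ambient-preconnected pair inside a COTS-arc is preconnected in the COTS. -/
lemma arc_no_deg3 {A : Set (ℤ × ℤ)} (hA : IsCOTSArc khalPlane A) {y a b c : ℤ × ℤ}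
    (hyA : y ∈ A) (haA : a ∈ A) (hbA : b ∈ A) (hcA : c ∈ A)
    (hab : a ≠ b) (hac : a ≠ c) (hbc : b ≠ c) (hya : y ≠ a) (hyb : y ≠ b) (hyc : y ≠ c)
    (ha : adjE y a) (hb : adjE y b) (hc : adjE y c) : False := by
  obtain ⟨C, tC, hfin, hC, f, hemb, hrange⟩ := hA
  rw [← hrange] at hyA haA hbA hcA
  obtain ⟨cy, rfl⟩ := hyA
  obtain ⟨ca, rfl⟩ := haA
  obtain ⟨cb, rfl⟩ := hbA
  obtain ⟨cc, rfl⟩ := hcA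
  have hinj := hemb.injective
  have key : ∀ u v : C, adjE (f u) (f v) → @IsPreconnected C tC {u, v} := by
    intro u v huv
    have himg : f '' ({u, v} : Set C) = {f u, f v} := by
      simp [Set.image_insert_eq]
    have := preconn_pair huv
    rw [← himg] at this
    exact (hemb.toIsInducing.isPreconnected_image).mp this
  exact cots_no_deg3 hC (fun h => hab (congrArg f h)) (fun h => hac (congrArg f h))
    (fun h => hbc (congrArg f h)) (fun h => hya (congrArg f h)) (fun h => hyb (congrArg f h))
    (fun h => hyc (congrArg f h)) (key cy ca ha) (key cy cb hb) (key cy cc hc)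

lemma arc_no_triangle {A : Set (ℤ × ℤ)} (hA : IsCOTSArc khalPlane A) {a b c : ℤ × ℤ}
    (haA : a ∈ A) (hbA : b ∈ A) (hcA : c ∈ A)
    (hab : a ≠ b) (hac : a ≠ c) (hbc : b ≠ c)
    (h1 : adjE a b) (h2 : adjE a c) (h3 : adjE b c) : False := by
  obtain ⟨C, tC, hfin, hC, f, hemb, hrange⟩ := hA
  rw [← hrange] at haA hbA hcA
  obtain ⟨ca, rfl⟩ := haA
  obtain ⟨cb, rfl⟩ := hbA
  obtain ⟨cc, rfl⟩ := hcA
  have key : ∀ u v : C, adjE (f u) (f v) → @IsPreconnected C tC {u, v} := by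
    intro u v huv
    have himg : f '' ({u, v} : Set C) = {f u, f v} := by
      simp [Set.image_insert_eq]
    have := preconn_pair huv
    rw [← himg] at this
    exact (hemb.toIsInducing.isPreconnected_image).mp this
  exact cots_no_triangle hC (fun h => hab (congrArg f h)) (fun h => hac (congrArg f h))
    (fun h => hbc (congrArg f h)) (key ca cb h1) (key ca cc h2) (key cb cc h3)

lemma arc_isConnected {A : Set (ℤ × ℤ)} (hA : IsCOTSArc khalPlane A) : IsConnected A := by
  obtain ⟨C, tC, hfin, hC, f, hemb, hrange⟩ := hA
  letI := tC
  haveI : ConnectedSpace C := hC.1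
  rw [← hrange]
  exact isConnected_range hemb.continuous

end S17
namespace S17

attribute [local instance 2000] khal khalPlane

lemma J_no_triangle {J : Set (ℤ × ℤ)} (hJ : IsJordanCurve khalPlane J) {a b c : ℤ × ℤ}
    (haJ : a ∈ J) (hbJ : b ∈ J) (hcJ : c ∈ J)
    (hab : a ≠ b) (hac : a ≠ c) (hbc : b ≠ c)
    (h1 : adjE a b) (h2 : adjE a c) (h3 : adjE b c) : False := by
  have hj : ∃ j ∈ J, j ≠ a ∧ j ≠ b ∧ j ≠ c := by
    by_contra hcon
    push_neg at hcon
    have hsub : J ⊆ {a, b, c} := by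
      intro x hx
      by_cases hxa : x = a
      · subst hxa; exact Set.mem_insert _ _
      · by_cases hxb : x = b
        · subst hxb; simp
        · have := hcon x hx hxa hxb; subst this; simp
    have h4 := hJ.2.1
    have h5 : J.ncard ≤ ({a, b, c} : Set (ℤ × ℤ)).ncard :=
      Set.ncard_le_ncard hsub (Set.toFinite _)
    have h6 : ({a, b, c} : Set (ℤ × ℤ)).ncard = 3 :=
      Set.ncard_eq_three.mpr ⟨a, b, c, hab, hac, hbc, rfl⟩
    omega
  obtain ⟨j, hjJ, hja, hjb, hjc⟩ := hj
  exact arc_no_triangle (hJ.2.2 j hjJ)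
    ⟨haJ, fun h => hja (by simpa using h.symm)⟩
    ⟨hbJ, fun h => hjb (by simpa using h.symm)⟩
    ⟨hcJ, fun h => hjc (by simpa using h.symm)⟩
    hab hac hbc h1 h2 h3

lemma J_deg2 {J : Set (ℤ × ℤ)} (hJ : IsJordanCurve khalPlane J) {u a b c : ℤ × ℤ}
    (huJ : u ∈ J) (haJ : a ∈ J) (hbJ : b ∈ J) (hcJ : c ∈ J)
    (hab : a ≠ b) (hac : a ≠ c) (hbc : b ≠ c)
    (hua : a ≠ u) (hub : b ≠ u) (huc : c ≠ u)
    (h1 : adjE u a) (h2 : adjE u b) (h3 : adjE u c) : False := by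
  by_cases hj : ∃ j ∈ J, j ≠ u ∧ j ≠ a ∧ j ≠ b ∧ j ≠ c
  · obtain ⟨j, hjJ, hju, hja, hjb, hjc⟩ := hj
    exact arc_no_deg3 (hJ.2.2 j hjJ)
      ⟨huJ, fun h => hju (by simpa using h.symm)⟩
      ⟨haJ, fun h => hja (by simpa using h.symm)⟩
      ⟨hbJ, fun h => hjb (by simpa using h.symm)⟩
      ⟨hcJ, fun h => hjc (by simpa using h.symm)⟩
      hab hac hbc (Ne.symm hua) (Ne.symm hub) (Ne.symm huc) h1 h2 h3
  · -- J = {u, a, b, c}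
    push_neg at hj
    have hJeq : J = {u, a, b, c} := by
      apply Set.Subset.antisymm
      · intro x hx
        by_cases hxu : x = u
        · exact hxu ▸ Set.mem_insert _ _
        · by_cases hxa : x = a
          · subst hxa; simp
          · by_cases hxb : x = b
            · subst hxb; simp
            · have := hj x hx hxu hxa hxb; subst this; simp
      · rintro x (rfl | rfl | rfl | hx)
        · exact huJ
        · exact haJ
        · exact hbJ
        · simp only [Set.mem_singleton_iff] at hx; subst hx; exact hcJ
    -- a, b, c pairwise non-adjacent (else triangle with u)
    have hnab : ¬ adjE a b := fun h => J_no_triangle hJ huJ haJ hbJ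
      (Ne.symm hua) (Ne.symm hub) hab h1 h2 h
    have hnac : ¬ adjE a c := fun h => J_no_triangle hJ huJ haJ hcJ
      (Ne.symm hua) (Ne.symm huc) hac h1 h3 h
    have hnbc : ¬ adjE b c := fun h => J_no_triangle hJ huJ hbJ hcJ
      (Ne.symm hub) (Ne.symm huc) hbc h2 h3 h
    -- J \ {u} = {a, b, c} is an arc, hence connected, contradiction
    have hAeq : J \ {u} = ({a, b, c} : Set (ℤ × ℤ)) := by
      rw [hJeq]
      ext x
      simp only [Set.mem_diff, Set.mem_insert_iff, Set.mem_singleton_iff]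
      constructor
      · rintro ⟨rfl | rfl | rfl | rfl, hxu⟩
        · exact absurd rfl hxu
        · exact Or.inl rfl
        · exact Or.inr (Or.inl rfl)
        · exact Or.inr (Or.inr rfl)
      · rintro (rfl | rfl | rfl)
        · exact ⟨Or.inr (Or.inl rfl), hua⟩
        · exact ⟨Or.inr (Or.inr (Or.inl rfl)), hub⟩
        · exact ⟨Or.inr (Or.inr (Or.inr rfl)), huc⟩
    have hArc := arc_isConnected (hJ.2.2 u huJ)
    rw [hAeq] at hArc
    have hpre := hArc.isPreconnected
    obtain ⟨z, hz, hz1, hz2⟩ := hpre (kNhd a) (kNhd b ∪ kNhd c)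
      (isOpen_kNhd a) ((isOpen_kNhd b).union (isOpen_kNhd c))
      (by rintro x (rfl | rfl | rfl)
          · exact Or.inl (self_mem_kNhd x)
          · exact Or.inr (Or.inl (self_mem_kNhd x))
          · exact Or.inr (Or.inr (self_mem_kNhd x)))
      ⟨a, Set.mem_insert _ _, self_mem_kNhd a⟩
      ⟨b, by simp, Or.inl (self_mem_kNhd b)⟩
    rcases hz with rfl | rfl | rfl
    · rcases hz2 with h | h
      · exact hnab (Or.inr h)
      · exact hnac (Or.inr h)
    · exact hnab (Or.inl hz1)
    · exact hnac (Or.inl hz1)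

lemma isPreconnected_J {J : Set (ℤ × ℤ)} (hJ : IsJordanCurve khalPlane J) :
    IsPreconnected J := by
  have h4 := hJ.2.1
  have hfin := hJ.1
  -- get two distinct points of J
  have hne : J.Nonempty := by
    rcases Set.eq_empty_or_nonempty J with rfl | h
    · simp [Set.ncard_empty] at h4
    · exact h
  obtain ⟨a, haJ⟩ := hne
  have hb : ∃ b ∈ J, b ≠ a := by
    by_contra hcon
    push_neg at hcon
    have : J ⊆ {a} := fun x hx => hcon x hx
    have := Set.ncard_le_ncard this (Set.toFinite _)
    simp [Set.ncard_singleton] at this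
    omega
  obtain ⟨b, hbJ, hba⟩ := hb
  have hc : ∃ c ∈ J, c ≠ a ∧ c ≠ b := by
    by_contra hcon
    push_neg at hcon
    have hsub : J ⊆ {a, b} := by
      intro x hx
      rcases Classical.em (x = a) with rfl | hxa
      · exact Set.mem_insert _ _
      · rcases Classical.em (x = b) with rfl | hxb
        · simp
        · exact absurd hxb (not_not.mpr (hcon x hx hxa))
    have := Set.ncard_le_ncard hsub (Set.toFinite _)
    rw [Set.ncard_pair (Ne.symm hba)] at this
    omega
  obtain ⟨c, hcJ, hca, hcb⟩ := hc
  have hJu : J = (J \ {a}) ∪ (J \ {b}) := by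
    ext x
    simp only [Set.mem_union, Set.mem_diff, Set.mem_singleton_iff]
    constructor
    · intro hx
      by_cases hxa : x = a
      · subst hxa; exact Or.inr ⟨hx, Ne.symm hba⟩
      · exact Or.inl ⟨hx, hxa⟩
    · rintro (⟨hx, _⟩ | ⟨hx, _⟩) <;> exact hx
  have hc1 : c ∈ J \ {a} := ⟨hcJ, hca⟩
  have hc2 : c ∈ J \ {b} := ⟨hcJ, hcb⟩
  rw [hJu]
  exact IsPreconnected.union c hc1 hc2
    (arc_isConnected (hJ.2.2 a haJ)).isPreconnected
    (arc_isConnected (hJ.2.2 b hbJ)).isPreconnected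

/-- `x` is adjacent to a point of an infinite component of `Jᶜ`. -/
def ExtAdj (J : Set (ℤ × ℤ)) (x : ℤ × ℤ) : Prop :=
  ∃ e, e ∉ J ∧ IsPreconnected ({x, e} : Set (ℤ × ℤ)) ∧
    (connectedComponentIn Jᶜ e).Infinite

lemma exists_good {J : Set (ℤ × ℤ)} (hJ : IsJordanCurve khalPlane J) :
    ∃ z ∈ J, ExtAdj J z := by
  have hfin := hJ.1
  have hne : J.Nonempty := by
    rcases Set.eq_empty_or_nonempty J with rfl | h
    · have := hJ.2.1; simp [Set.ncard_empty] at this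
    · exact h
  obtain ⟨z, hzJ, hzmax⟩ := Set.exists_max_image J Prod.snd hfin hne
  refine ⟨z, hzJ, (z.1, z.2 + 1), ?_, ?_, ?_⟩
  · intro hc
    have := hzmax _ hc
    simp at this
  · have h1 := preconn_pair (adjE_add_01 z)
    have h2 : z + ((0 : ℤ), (1 : ℤ)) = (z.1, z.2 + 1) := by
      ext <;> simp
    rw [h2] at h1
    exact h1
  · have hsub : {q : ℤ × ℤ | q.1 = z.1 ∧ z.2 + 1 ≤ q.2} ⊆ Jᶜ := by
      intro q hq hqJ
      have := hzmax q hqJ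
      have := hq.2
      omega
    have hmem : ((z.1, z.2 + 1) : ℤ × ℤ) ∈ {q : ℤ × ℤ | q.1 = z.1 ∧ z.2 + 1 ≤ q.2} :=
      ⟨rfl, le_refl _⟩
    have h3 := (ray_preconn z.1 (z.2 + 1)).subset_connectedComponentIn hmem hsub
    exact (ray_infinite z.1 (z.2 + 1)).mono h3

end S17
namespace S17

attribute [local instance 2000] khal khalPlane

lemma ring_prop {n : ℕ} [NeZero n] (hn1 : (1 : ZMod n) ≠ 0)
    {J : Set (ℤ × ℤ)} (hJ : IsJordanCurve khalPlane J)
    {u : ℤ × ℤ} (huJ : u ∈ J) (r : ZMod n → ℤ × ℤ) (rinj : Function.Injective r)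
    (radj : ∀ i, adjE (r i) (r (i + 1)))
    (rmem : ∀ i, adjE u (r i) ∧ r i ≠ u)
    (rcompl : ∀ y, adjE u y → y ≠ u → ∃ i, r i = y)
    {v : ℤ × ℤ} (hvJ : v ∈ J) (hvu : v ≠ u) (hauv : adjE u v)
    {e : ℤ × ℤ} (heJ : e ∉ J) (haue : adjE u e)
    (hinf : (connectedComponentIn Jᶜ e).Infinite) : ExtAdj J v := by
  obtain ⟨iv, hiv⟩ := rcompl v hauv hvu
  have heu : e ≠ u := fun hh => heJ (hh ▸ huJ)
  obtain ⟨je, hje⟩ := rcompl e haue heu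
  have hjeiv : je ≠ iv := by
    intro hh
    apply heJ
    rw [← hje, hh, hiv]
    exact hvJ
  have key : ∀ iw : ZMod n, iw ≠ je → (∀ m : ZMod n, m ≠ iv → m ≠ iw → r m ∉ J) →
      ExtAdj J v := by
    intro iw hiwje H
    have hivje : iv - je ≠ 0 := sub_ne_zero.mpr (Ne.symm hjeiv)
    have hiwje' : iw - je ≠ 0 := sub_ne_zero.mpr hiwje
    set A := (iv - je).val with hA
    set B := (iw - je).val with hB
    have hA' : (je - iv).val = n - A := by
      rw [show je - iv = -(iv - je) by ring, ZMod.neg_val, if_neg hivje]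
    have hB' : (je - iw).val = n - B := by
      rw [show je - iw = -(iw - je) by ring, ZMod.neg_val, if_neg hiwje']
    have hApos : A ≠ 0 := fun hh => hivje ((ZMod.val_eq_zero _).mp hh)
    have hBpos : B ≠ 0 := fun hh => hiwje' ((ZMod.val_eq_zero _).mp hh)
    have hAlt : A < n := ZMod.val_lt _
    have hBlt : B < n := ZMod.val_lt _
    have hcastA : ((A : ℕ) : ZMod n) = iv - je := ZMod.natCast_rightInverse _
    have hcastB : ((B : ℕ) : ZMod n) = iw - je := ZMod.natCast_rightInverse _
    have hcastA' : (((n - A : ℕ)) : ZMod n) = je - iv := by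
      rw [← hA']; exact ZMod.natCast_rightInverse _
    have hcastB' : (((n - B : ℕ)) : ZMod n) = je - iw := by
      rw [← hB']; exact ZMod.natCast_rightInverse _
    -- walking upwards
    have walkup : ∀ d : ℕ,
        (∀ t : ℕ, t ≤ d → (je + (t : ZMod n) ≠ iv ∧ je + (t : ZMod n) ≠ iw)) →
        connectedComponentIn Jᶜ (r je) = connectedComponentIn Jᶜ (r (je + (d : ZMod n))) := by
      intro d
      induction d with
      | zero => intro _; norm_num
      | succ d ih =>
          intro hcond
          have h1 := ih (fun t ht => hcond t (le_trans ht (Nat.le_succ d)))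
          rw [h1]
          have hc1 := hcond d (Nat.le_succ d)
          have hc2 := hcond (d + 1) le_rfl
          have hcast : (((d + 1 : ℕ)) : ZMod n) = ((d : ℕ) : ZMod n) + 1 := by push_cast; ring
          rw [hcast, ← add_assoc]
          refine ccIn_eq_of_adjE (H _ hc1.1 hc1.2) (H _ ?_ ?_) (radj _)
          · rw [add_assoc, ← hcast]; exact hc2.1
          · rw [add_assoc, ← hcast]; exact hc2.2
    -- walking downwards
    have walkdown : ∀ d : ℕ,
        (∀ t : ℕ, t ≤ d → (je - (t : ZMod n) ≠ iv ∧ je - (t : ZMod n) ≠ iw)) →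
        connectedComponentIn Jᶜ (r je) = connectedComponentIn Jᶜ (r (je - (d : ZMod n))) := by
      intro d
      induction d with
      | zero => intro _; norm_num
      | succ d ih =>
          intro hcond
          have h1 := ih (fun t ht => hcond t (le_trans ht (Nat.le_succ d)))
          rw [h1]
          have hc1 := hcond d (Nat.le_succ d)
          have hc2 := hcond (d + 1) le_rfl
          have hcast : (((d + 1 : ℕ)) : ZMod n) = ((d : ℕ) : ZMod n) + 1 := by push_cast; ring
          have hadj : adjE (r (je - ((d + 1 : ℕ) : ZMod n))) (r (je - ((d : ℕ) : ZMod n))) := by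
            have h2 := radj (je - ((d + 1 : ℕ) : ZMod n))
            have h3 : je - ((d + 1 : ℕ) : ZMod n) + 1 = je - ((d : ℕ) : ZMod n) := by
              rw [hcast]; ring
            rwa [h3] at h2
          exact (ccIn_eq_of_adjE (H _ hc2.1 hc2.2) (H _ hc1.1 hc1.2) hadj).symm
    by_cases hdir : A ≤ B
    · -- walk up from je to iv - 1
      have hcond : ∀ t : ℕ, t ≤ A - 1 → (je + (t : ZMod n) ≠ iv ∧ je + (t : ZMod n) ≠ iw) := by
        intro t ht
        constructor
        · intro hh
          have h2 : ((t : ℕ) : ZMod n) = iv - je := by rw [← hh]; ring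
          have h3 := congrArg ZMod.val h2
          rw [ZMod.val_cast_of_lt (by omega : t < n)] at h3
          omega
        · intro hh
          have h2 : ((t : ℕ) : ZMod n) = iw - je := by rw [← hh]; ring
          have h3 := congrArg ZMod.val h2
          rw [ZMod.val_cast_of_lt (by omega : t < n)] at h3
          omega
      have hw := walkup (A - 1) hcond
      have hend : je + ((A - 1 : ℕ) : ZMod n) + 1 = iv := by
        have h1 : ((A - 1 : ℕ) : ZMod n) + 1 = ((A : ℕ) : ZMod n) := by
          have h0 : A - 1 + 1 = A := by omega
          rw [← h0]; push_cast; ring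
        rw [add_assoc, h1, hcastA]; ring
      have hm0v : je + ((A - 1 : ℕ) : ZMod n) ≠ iv := by
        intro hh
        rw [hh] at hend
        exact hn1 ((left_eq_add).mp hend.symm)
      have hm0w : je + ((A - 1 : ℕ) : ZMod n) ≠ iw := (hcond (A - 1) le_rfl).2
      have hm0J : r (je + ((A - 1 : ℕ) : ZMod n)) ∉ J := H _ hm0v hm0w
      have hadj : adjE (r (je + ((A - 1 : ℕ) : ZMod n))) v := by
        have h2 := radj (je + ((A - 1 : ℕ) : ZMod n))
        rwa [hend, hiv] at h2
      refine ⟨r (je + ((A - 1 : ℕ) : ZMod n)), hm0J, ?_, ?_⟩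
      · rw [Set.pair_comm]; exact preconn_pair hadj
      · rw [hje] at hw; rw [← hw]; exact hinf
    · -- walk down from je to iv + 1
      push_neg at hdir
      have hcond : ∀ t : ℕ, t ≤ (n - A) - 1 →
          (je - (t : ZMod n) ≠ iv ∧ je - (t : ZMod n) ≠ iw) := by
        intro t ht
        constructor
        · intro hh
          have h2 : ((t : ℕ) : ZMod n) = je - iv := by rw [← hh]; ring
          have h3 := congrArg ZMod.val h2
          rw [ZMod.val_cast_of_lt (by omega : t < n), hA'] at h3
          omega
        · intro hh
          have h2 : ((t : ℕ) : ZMod n) = je - iw := by rw [← hh]; ring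
          have h3 := congrArg ZMod.val h2
          rw [ZMod.val_cast_of_lt (by omega : t < n), hB'] at h3
          omega
      have hw := walkdown ((n - A) - 1) hcond
      have hend : iv + 1 = je - (((n - A) - 1 : ℕ) : ZMod n) := by
        have h1 : (((n - A) - 1 : ℕ) : ZMod n) + 1 = ((n - A : ℕ) : ZMod n) := by
          have h0 : (n - A) - 1 + 1 = n - A := by omega
          rw [← h0]; push_cast; ring
        have h2 : je - (((n - A) - 1 : ℕ) : ZMod n) = je - ((n - A : ℕ) : ZMod n) + 1 := by
          rw [← h1]; ring
        rw [h2, hcastA']; ring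
      have hm0v : je - (((n - A) - 1 : ℕ) : ZMod n) ≠ iv := by
        intro hh
        rw [hh] at hend
        exact hn1 ((left_eq_add).mp hend.symm)
      have hm0w : je - (((n - A) - 1 : ℕ) : ZMod n) ≠ iw := (hcond _ le_rfl).2
      have hm0J : r (je - (((n - A) - 1 : ℕ) : ZMod n)) ∉ J := H _ hm0v hm0w
      have hadj : adjE v (r (je - (((n - A) - 1 : ℕ) : ZMod n))) := by
        have h2 := radj iv
        rwa [hiv, hend] at h2
      refine ⟨r (je - (((n - A) - 1 : ℕ) : ZMod n)), hm0J, preconn_pair hadj, ?_⟩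
      rw [hje] at hw; rw [← hw]; exact hinf
  by_cases hW : ∃ i0 : ZMod n, r i0 ∈ J ∧ r i0 ≠ v
  · obtain ⟨iw, hiwJ, hiwv⟩ := hW
    have hiwje : iw ≠ je := by
      intro hh
      apply heJ
      rw [← hje, ← hh]
      exact hiwJ
    apply key iw hiwje
    intro m hm1 hm2 hmJ
    have hmv : r m ≠ v := fun hh => hm1 (rinj (by rw [hh, hiv]))
    have hmw : r m ≠ r iw := fun hh => hm2 (rinj hh)
    exact J_deg2 hJ huJ hvJ hiwJ hmJ (Ne.symm hiwv) (Ne.symm hmv) (Ne.symm hmw)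
      hvu (rmem iw).2 (rmem m).2 hauv (rmem iw).1 (rmem m).1
  · push_neg at hW
    apply key iv (Ne.symm hjeiv)
    intro m hm1 _ hmJ
    exact hm1 (rinj (by rw [hW m hmJ, ← hiv]))

end S17
namespace S17

attribute [local instance 2000] khal khalPlane

def dd8 (i : ZMod 8) : ℤ × ℤ :=
  match i.val with
  | 0 => (1, 0) | 1 => (1, 1) | 2 => (0, 1) | 3 => (-1, 1)
  | 4 => (-1, 0) | 5 => (-1, -1) | 6 => (0, -1) | _ => (1, -1)

def dd4 (i : ZMod 4) : ℤ × ℤ :=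
  match i.val with
  | 0 => (1, 0) | 1 => (0, 1) | 2 => (-1, 0) | _ => (0, -1)

lemma dd8_inj : Function.Injective dd8 := by decide

lemma dd4_inj : Function.Injective dd4 := by decide

lemma dd8_bounds : ∀ i : ZMod 8,
    (-1 ≤ (dd8 i).1 ∧ (dd8 i).1 ≤ 1) ∧ (-1 ≤ (dd8 i).2 ∧ (dd8 i).2 ≤ 1) ∧ dd8 i ≠ 0 := by
  decide

lemma dd4_bounds : ∀ i : ZMod 4,
    (-1 ≤ (dd4 i).1 ∧ (dd4 i).1 ≤ 1) ∧ (-1 ≤ (dd4 i).2 ∧ (dd4 i).2 ≤ 1) ∧ dd4 i ≠ 0 := by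
  decide

lemma fst_addp (u : ℤ × ℤ) (a b : ℤ) : (u + (a, b)).1 = u.1 + a := rfl

lemma snd_addp (u : ℤ × ℤ) (a b : ℤ) : (u + (a, b)).2 = u.2 + b := rfl

lemma adjE_stepE (p d : ℤ × ℤ) : adjE (p + d) (p + (d + (1, 0))) := by
  have := adjE_add_10 (p + d); rwa [add_assoc] at this

lemma adjE_stepN (p d : ℤ × ℤ) : adjE (p + d) (p + (d + (0, 1))) := by
  have := adjE_add_01 (p + d); rwa [add_assoc] at this

lemma radj8 (u : ℤ × ℤ) : ∀ i : ZMod 8, adjE (u + dd8 i) (u + dd8 (i + 1)) := by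
  intro i
  fin_cases i
  · show adjE (u + (1, 0)) (u + (1, 1))
    have h := adjE_stepN u (1, 0)
    have he : ((1, 0) : ℤ × ℤ) + (0, 1) = (1, 1) := by decide
    rwa [he] at h
  · show adjE (u + (1, 1)) (u + (0, 1))
    have h := adjE_stepE u (0, 1)
    have he : ((0, 1) : ℤ × ℤ) + (1, 0) = (1, 1) := by decide
    rw [he] at h
    exact h.symm
  · show adjE (u + (0, 1)) (u + (-1, 1))
    have h := adjE_stepE u (-1, 1)
    have he : ((-1, 1) : ℤ × ℤ) + (1, 0) = (0, 1) := by decide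
    rw [he] at h
    exact h.symm
  · show adjE (u + (-1, 1)) (u + (-1, 0))
    have h := adjE_stepN u (-1, 0)
    have he : ((-1, 0) : ℤ × ℤ) + (0, 1) = (-1, 1) := by decide
    rw [he] at h
    exact h.symm
  · show adjE (u + (-1, 0)) (u + (-1, -1))
    have h := adjE_stepN u (-1, -1)
    have he : ((-1, -1) : ℤ × ℤ) + (0, 1) = (-1, 0) := by decide
    rw [he] at h
    exact h.symm
  · show adjE (u + (-1, -1)) (u + (0, -1))
    have h := adjE_stepE u (-1, -1)
    have he : ((-1, -1) : ℤ × ℤ) + (1, 0) = (0, -1) := by decide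
    rwa [he] at h
  · show adjE (u + (0, -1)) (u + (1, -1))
    have h := adjE_stepE u (0, -1)
    have he : ((0, -1) : ℤ × ℤ) + (1, 0) = (1, -1) := by decide
    rwa [he] at h
  · show adjE (u + (1, -1)) (u + (1, 0))
    have h := adjE_stepN u (1, -1)
    have he : ((1, -1) : ℤ × ℤ) + (0, 1) = (1, 0) := by decide
    rwa [he] at h

lemma radj4_EO {u : ℤ × ℤ} (hu1 : u.1 % 2 = 0) (hu2 : u.2 % 2 = 1) :
    ∀ i : ZMod 4, adjE (u + dd4 i) (u + dd4 (i + 1)) := by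
  intro i
  have hN1 : (u + ((0 : ℤ), (1 : ℤ))).1 % 2 = 0 := by simp; omega
  have hN2 : (u + ((0 : ℤ), (1 : ℤ))).2 % 2 = 0 := by simp; omega
  have hS1 : (u + ((0 : ℤ), (-1 : ℤ))).1 % 2 = 0 := by simp; omega
  have hS2 : (u + ((0 : ℤ), (-1 : ℤ))).2 % 2 = 0 := by simp; omega
  fin_cases i
  · show adjE (u + (1, 0)) (u + (0, 1))
    refine (adjE_evenbox hN1 hN2 ?_ ?_ ?_ ?_).symm <;> simp <;> omega
  · show adjE (u + (0, 1)) (u + (-1, 0))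
    refine adjE_evenbox hN1 hN2 ?_ ?_ ?_ ?_ <;> simp <;> omega
  · show adjE (u + (-1, 0)) (u + (0, -1))
    refine (adjE_evenbox hS1 hS2 ?_ ?_ ?_ ?_).symm <;> simp <;> omega
  · show adjE (u + (0, -1)) (u + (1, 0))
    refine adjE_evenbox hS1 hS2 ?_ ?_ ?_ ?_ <;> simp <;> omega

lemma radj4_OE {u : ℤ × ℤ} (hu1 : u.1 % 2 = 1) (hu2 : u.2 % 2 = 0) :
    ∀ i : ZMod 4, adjE (u + dd4 i) (u + dd4 (i + 1)) := by
  intro i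
  have hE1 : (u + ((1 : ℤ), (0 : ℤ))).1 % 2 = 0 := by simp; omega
  have hE2 : (u + ((1 : ℤ), (0 : ℤ))).2 % 2 = 0 := by simp; omega
  have hW1 : (u + ((-1 : ℤ), (0 : ℤ))).1 % 2 = 0 := by simp; omega
  have hW2 : (u + ((-1 : ℤ), (0 : ℤ))).2 % 2 = 0 := by simp; omega
  fin_cases i
  · show adjE (u + (1, 0)) (u + (0, 1))
    refine adjE_evenbox hE1 hE2 ?_ ?_ ?_ ?_ <;> simp <;> omega
  · show adjE (u + (0, 1)) (u + (-1, 0))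
    refine (adjE_evenbox hW1 hW2 ?_ ?_ ?_ ?_).symm <;> simp <;> omega
  · show adjE (u + (-1, 0)) (u + (0, -1))
    refine adjE_evenbox hW1 hW2 ?_ ?_ ?_ ?_ <;> simp <;> omega
  · show adjE (u + (0, -1)) (u + (1, 0))
    refine (adjE_evenbox hE1 hE2 ?_ ?_ ?_ ?_).symm <;> simp <;> omega

lemma rmem_EE {u : ℤ × ℤ} (hu1 : u.1 % 2 = 0) (hu2 : u.2 % 2 = 0) :
    ∀ i : ZMod 8, adjE u (u + dd8 i) ∧ u + dd8 i ≠ u := by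
  intro i
  obtain ⟨⟨b1, b2⟩, ⟨b3, b4⟩, b5⟩ := dd8_bounds i
  rcases hdd : dd8 i with ⟨d1, d2⟩
  rw [hdd] at b1 b2 b3 b4 b5
  replace b1 : -1 ≤ d1 := b1
  replace b2 : d1 ≤ 1 := b2
  replace b3 : -1 ≤ d2 := b3
  replace b4 : d2 ≤ 1 := b4
  constructor
  · left
    rw [mem_kNhd, fst_addp, snd_addp, mem_kint, mem_kint]
    omega
  · intro h; exact b5 (add_eq_left.mp h)

lemma rmem_OO {u : ℤ × ℤ} (hu1 : u.1 % 2 = 1) (hu2 : u.2 % 2 = 1) :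
    ∀ i : ZMod 8, adjE u (u + dd8 i) ∧ u + dd8 i ≠ u := by
  intro i
  obtain ⟨⟨b1, b2⟩, ⟨b3, b4⟩, b5⟩ := dd8_bounds i
  rcases hdd : dd8 i with ⟨d1, d2⟩
  rw [hdd] at b1 b2 b3 b4 b5
  replace b1 : -1 ≤ d1 := b1
  replace b2 : d1 ≤ 1 := b2
  replace b3 : -1 ≤ d2 := b3
  replace b4 : d2 ≤ 1 := b4
  have b6 : ¬(d1 = 0 ∧ d2 = 0) := by
    intro ⟨h1, h2⟩
    subst h1; subst h2
    exact b5 rfl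
  constructor
  · right
    rw [mem_kNhd, fst_addp, snd_addp, mem_kint, mem_kint]
    omega
  · intro h; exact b5 (add_eq_left.mp h)

lemma rmem_EO {u : ℤ × ℤ} (hu1 : u.1 % 2 = 0) (hu2 : u.2 % 2 = 1) :
    ∀ i : ZMod 4, adjE u (u + dd4 i) ∧ u + dd4 i ≠ u := by
  intro i
  have hne : ∀ j : ZMod 4, u + dd4 j ≠ u := by
    intro j h
    exact (dd4_bounds j).2.2 (add_eq_left.mp h)
  fin_cases i
  · refine ⟨Or.inl ?_, hne 0⟩
    show (u + (1, 0)) ∈ kNhd u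
    rw [mem_kNhd, fst_addp, snd_addp, mem_kint, mem_kint]
    omega
  · refine ⟨Or.inr ?_, hne 1⟩
    show u ∈ kNhd (u + (0, 1))
    rw [mem_kNhd, fst_addp, snd_addp, mem_kint, mem_kint]
    omega
  · refine ⟨Or.inl ?_, hne 2⟩
    show (u + (-1, 0)) ∈ kNhd u
    rw [mem_kNhd, fst_addp, snd_addp, mem_kint, mem_kint]
    omega
  · refine ⟨Or.inr ?_, hne 3⟩
    show u ∈ kNhd (u + (0, -1))
    rw [mem_kNhd, fst_addp, snd_addp, mem_kint, mem_kint]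
    omega

lemma rmem_OE {u : ℤ × ℤ} (hu1 : u.1 % 2 = 1) (hu2 : u.2 % 2 = 0) :
    ∀ i : ZMod 4, adjE u (u + dd4 i) ∧ u + dd4 i ≠ u := by
  intro i
  have hne : ∀ j : ZMod 4, u + dd4 j ≠ u := by
    intro j h
    exact (dd4_bounds j).2.2 (add_eq_left.mp h)
  fin_cases i
  · refine ⟨Or.inr ?_, hne 0⟩
    show u ∈ kNhd (u + (1, 0))
    rw [mem_kNhd, fst_addp, snd_addp, mem_kint, mem_kint]
    omega
  · refine ⟨Or.inl ?_, hne 1⟩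
    show (u + (0, 1)) ∈ kNhd u
    rw [mem_kNhd, fst_addp, snd_addp, mem_kint, mem_kint]
    omega
  · refine ⟨Or.inr ?_, hne 2⟩
    show u ∈ kNhd (u + (-1, 0))
    rw [mem_kNhd, fst_addp, snd_addp, mem_kint, mem_kint]
    omega
  · refine ⟨Or.inl ?_, hne 3⟩
    show (u + (0, -1)) ∈ kNhd u
    rw [mem_kNhd, fst_addp, snd_addp, mem_kint, mem_kint]
    omega

end S17
namespace S17

attribute [local instance 2000] khal khalPlane

lemma rcompl_EE {u : ℤ × ℤ} (hu1 : u.1 % 2 = 0) (hu2 : u.2 % 2 = 0) :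
    ∀ y, adjE u y → y ≠ u → ∃ i : ZMod 8, u + dd8 i = y := by
  intro y hadj hne
  have hne' : ¬(y.1 = u.1 ∧ y.2 = u.2) := fun hc => hne (Prod.ext_iff.mpr hc)
  have hb : (-1 ≤ y.1 - u.1 ∧ y.1 - u.1 ≤ 1) ∧ (-1 ≤ y.2 - u.2 ∧ y.2 - u.2 ≤ 1) := by
    rcases hadj with h | h
    · rw [mem_kNhd, mem_kint, mem_kint] at h; omega
    · rw [mem_kNhd, mem_kint, mem_kint] at h; omega
  have hcase : (y.1 = u.1 + 1 ∧ y.2 = u.2) ∨ (y.1 = u.1 + 1 ∧ y.2 = u.2 + 1) ∨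
      (y.1 = u.1 ∧ y.2 = u.2 + 1) ∨ (y.1 = u.1 - 1 ∧ y.2 = u.2 + 1) ∨
      (y.1 = u.1 - 1 ∧ y.2 = u.2) ∨ (y.1 = u.1 - 1 ∧ y.2 = u.2 - 1) ∨
      (y.1 = u.1 ∧ y.2 = u.2 - 1) ∨ (y.1 = u.1 + 1 ∧ y.2 = u.2 - 1) := by
    omega
  rcases hcase with h | h | h | h | h | h | h | h
  · exact ⟨0, Prod.ext_iff.mpr ⟨by rw [show dd8 0 = (1, 0) from rfl, fst_addp]; omega,
      by rw [show dd8 0 = (1, 0) from rfl, snd_addp]; omega⟩⟩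
  · exact ⟨1, Prod.ext_iff.mpr ⟨by rw [show dd8 1 = (1, 1) from rfl, fst_addp]; omega,
      by rw [show dd8 1 = (1, 1) from rfl, snd_addp]; omega⟩⟩
  · exact ⟨2, Prod.ext_iff.mpr ⟨by rw [show dd8 2 = (0, 1) from rfl, fst_addp]; omega,
      by rw [show dd8 2 = (0, 1) from rfl, snd_addp]; omega⟩⟩
  · exact ⟨3, Prod.ext_iff.mpr ⟨by rw [show dd8 3 = (-1, 1) from rfl, fst_addp]; omega,
      by rw [show dd8 3 = (-1, 1) from rfl, snd_addp]; omega⟩⟩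
  · exact ⟨4, Prod.ext_iff.mpr ⟨by rw [show dd8 4 = (-1, 0) from rfl, fst_addp]; omega,
      by rw [show dd8 4 = (-1, 0) from rfl, snd_addp]; omega⟩⟩
  · exact ⟨5, Prod.ext_iff.mpr ⟨by rw [show dd8 5 = (-1, -1) from rfl, fst_addp]; omega,
      by rw [show dd8 5 = (-1, -1) from rfl, snd_addp]; omega⟩⟩
  · exact ⟨6, Prod.ext_iff.mpr ⟨by rw [show dd8 6 = (0, -1) from rfl, fst_addp]; omega,
      by rw [show dd8 6 = (0, -1) from rfl, snd_addp]; omega⟩⟩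
  · exact ⟨7, Prod.ext_iff.mpr ⟨by rw [show dd8 7 = (1, -1) from rfl, fst_addp]; omega,
      by rw [show dd8 7 = (1, -1) from rfl, snd_addp]; omega⟩⟩

lemma rcompl_OO {u : ℤ × ℤ} (hu1 : u.1 % 2 = 1) (hu2 : u.2 % 2 = 1) :
    ∀ y, adjE u y → y ≠ u → ∃ i : ZMod 8, u + dd8 i = y := by
  intro y hadj hne
  have hne' : ¬(y.1 = u.1 ∧ y.2 = u.2) := fun hc => hne (Prod.ext_iff.mpr hc)
  have hb : (-1 ≤ y.1 - u.1 ∧ y.1 - u.1 ≤ 1) ∧ (-1 ≤ y.2 - u.2 ∧ y.2 - u.2 ≤ 1) := by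
    rcases hadj with h | h
    · rw [mem_kNhd, mem_kint, mem_kint] at h; omega
    · rw [mem_kNhd, mem_kint, mem_kint] at h; omega
  have hcase : (y.1 = u.1 + 1 ∧ y.2 = u.2) ∨ (y.1 = u.1 + 1 ∧ y.2 = u.2 + 1) ∨
      (y.1 = u.1 ∧ y.2 = u.2 + 1) ∨ (y.1 = u.1 - 1 ∧ y.2 = u.2 + 1) ∨
      (y.1 = u.1 - 1 ∧ y.2 = u.2) ∨ (y.1 = u.1 - 1 ∧ y.2 = u.2 - 1) ∨
      (y.1 = u.1 ∧ y.2 = u.2 - 1) ∨ (y.1 = u.1 + 1 ∧ y.2 = u.2 - 1) := by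
    omega
  rcases hcase with h | h | h | h | h | h | h | h
  · exact ⟨0, Prod.ext_iff.mpr ⟨by rw [show dd8 0 = (1, 0) from rfl, fst_addp]; omega,
      by rw [show dd8 0 = (1, 0) from rfl, snd_addp]; omega⟩⟩
  · exact ⟨1, Prod.ext_iff.mpr ⟨by rw [show dd8 1 = (1, 1) from rfl, fst_addp]; omega,
      by rw [show dd8 1 = (1, 1) from rfl, snd_addp]; omega⟩⟩
  · exact ⟨2, Prod.ext_iff.mpr ⟨by rw [show dd8 2 = (0, 1) from rfl, fst_addp]; omega,
      by rw [show dd8 2 = (0, 1) from rfl, snd_addp]; omega⟩⟩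
  · exact ⟨3, Prod.ext_iff.mpr ⟨by rw [show dd8 3 = (-1, 1) from rfl, fst_addp]; omega,
      by rw [show dd8 3 = (-1, 1) from rfl, snd_addp]; omega⟩⟩
  · exact ⟨4, Prod.ext_iff.mpr ⟨by rw [show dd8 4 = (-1, 0) from rfl, fst_addp]; omega,
      by rw [show dd8 4 = (-1, 0) from rfl, snd_addp]; omega⟩⟩
  · exact ⟨5, Prod.ext_iff.mpr ⟨by rw [show dd8 5 = (-1, -1) from rfl, fst_addp]; omega,
      by rw [show dd8 5 = (-1, -1) from rfl, snd_addp]; omega⟩⟩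
  · exact ⟨6, Prod.ext_iff.mpr ⟨by rw [show dd8 6 = (0, -1) from rfl, fst_addp]; omega,
      by rw [show dd8 6 = (0, -1) from rfl, snd_addp]; omega⟩⟩
  · exact ⟨7, Prod.ext_iff.mpr ⟨by rw [show dd8 7 = (1, -1) from rfl, fst_addp]; omega,
      by rw [show dd8 7 = (1, -1) from rfl, snd_addp]; omega⟩⟩

lemma rcompl_EO {u : ℤ × ℤ} (hu1 : u.1 % 2 = 0) (hu2 : u.2 % 2 = 1) :
    ∀ y, adjE u y → y ≠ u → ∃ i : ZMod 4, u + dd4 i = y := by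
  intro y hadj hne
  have hne' : ¬(y.1 = u.1 ∧ y.2 = u.2) := fun hc => hne (Prod.ext_iff.mpr hc)
  have hcase : (y.1 = u.1 + 1 ∧ y.2 = u.2) ∨ (y.1 = u.1 ∧ y.2 = u.2 + 1) ∨
      (y.1 = u.1 - 1 ∧ y.2 = u.2) ∨ (y.1 = u.1 ∧ y.2 = u.2 - 1) := by
    rcases hadj with h | h
    · rw [mem_kNhd, mem_kint, mem_kint] at h; omega
    · rw [mem_kNhd, mem_kint, mem_kint] at h; omega
  rcases hcase with h | h | h | h
  · exact ⟨0, Prod.ext_iff.mpr ⟨by rw [show dd4 0 = (1, 0) from rfl, fst_addp]; omega,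
      by rw [show dd4 0 = (1, 0) from rfl, snd_addp]; omega⟩⟩
  · exact ⟨1, Prod.ext_iff.mpr ⟨by rw [show dd4 1 = (0, 1) from rfl, fst_addp]; omega,
      by rw [show dd4 1 = (0, 1) from rfl, snd_addp]; omega⟩⟩
  · exact ⟨2, Prod.ext_iff.mpr ⟨by rw [show dd4 2 = (-1, 0) from rfl, fst_addp]; omega,
      by rw [show dd4 2 = (-1, 0) from rfl, snd_addp]; omega⟩⟩
  · exact ⟨3, Prod.ext_iff.mpr ⟨by rw [show dd4 3 = (0, -1) from rfl, fst_addp]; omega,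
      by rw [show dd4 3 = (0, -1) from rfl, snd_addp]; omega⟩⟩

lemma rcompl_OE {u : ℤ × ℤ} (hu1 : u.1 % 2 = 1) (hu2 : u.2 % 2 = 0) :
    ∀ y, adjE u y → y ≠ u → ∃ i : ZMod 4, u + dd4 i = y := by
  intro y hadj hne
  have hne' : ¬(y.1 = u.1 ∧ y.2 = u.2) := fun hc => hne (Prod.ext_iff.mpr hc)
  have hcase : (y.1 = u.1 + 1 ∧ y.2 = u.2) ∨ (y.1 = u.1 ∧ y.2 = u.2 + 1) ∨
      (y.1 = u.1 - 1 ∧ y.2 = u.2) ∨ (y.1 = u.1 ∧ y.2 = u.2 - 1) := by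
    rcases hadj with h | h
    · rw [mem_kNhd, mem_kint, mem_kint] at h; omega
    · rw [mem_kNhd, mem_kint, mem_kint] at h; omega
  rcases hcase with h | h | h | h
  · exact ⟨0, Prod.ext_iff.mpr ⟨by rw [show dd4 0 = (1, 0) from rfl, fst_addp]; omega,
      by rw [show dd4 0 = (1, 0) from rfl, snd_addp]; omega⟩⟩
  · exact ⟨1, Prod.ext_iff.mpr ⟨by rw [show dd4 1 = (0, 1) from rfl, fst_addp]; omega,
      by rw [show dd4 1 = (0, 1) from rfl, snd_addp]; omega⟩⟩
  · exact ⟨2, Prod.ext_iff.mpr ⟨by rw [show dd4 2 = (-1, 0) from rfl, fst_addp]; omega,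
      by rw [show dd4 2 = (-1, 0) from rfl, snd_addp]; omega⟩⟩
  · exact ⟨3, Prod.ext_iff.mpr ⟨by rw [show dd4 3 = (0, -1) from rfl, fst_addp]; omega,
      by rw [show dd4 3 = (0, -1) from rfl, snd_addp]; omega⟩⟩

lemma prop_step {J : Set (ℤ × ℤ)} (hJ : IsJordanCurve khalPlane J) {u v : ℤ × ℤ}
    (huJ : u ∈ J) (hvJ : v ∈ J) (hvu : v ≠ u) (hauv : adjE u v)
    (hgood : ExtAdj J u) : ExtAdj J v := by
  obtain ⟨e, heJ, hpre, hinf⟩ := hgood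
  have heu : u ≠ e := fun hh => heJ (hh ▸ huJ)
  have haue : adjE u e := adjE_of_preconn heu hpre
  haveI : NeZero 8 := ⟨by norm_num⟩
  haveI : NeZero 4 := ⟨by norm_num⟩
  rcases Int.emod_two_eq_zero_or_one u.1 with h1 | h1 <;>
    rcases Int.emod_two_eq_zero_or_one u.2 with h2 | h2
  · exact ring_prop (n := 8) (by decide) hJ huJ _
      (fun i j hh => dd8_inj (add_left_cancel hh)) (radj8 u) (rmem_EE h1 h2)
      (rcompl_EE h1 h2) hvJ hvu hauv heJ haue hinf
  · exact ring_prop (n := 4) (by decide) hJ huJ _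
      (fun i j hh => dd4_inj (add_left_cancel hh)) (radj4_EO h1 h2) (rmem_EO h1 h2)
      (rcompl_EO h1 h2) hvJ hvu hauv heJ haue hinf
  · exact ring_prop (n := 4) (by decide) hJ huJ _
      (fun i j hh => dd4_inj (add_left_cancel hh)) (radj4_OE h1 h2) (rmem_OE h1 h2)
      (rcompl_OE h1 h2) hvJ hvu hauv heJ haue hinf
  · exact ring_prop (n := 8) (by decide) hJ huJ _
      (fun i j hh => dd8_inj (add_left_cancel hh)) (radj8 u) (rmem_OO h1 h2)
      (rcompl_OO h1 h2) hvJ hvu hauv heJ haue hinf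

lemma good_all {J : Set (ℤ × ℤ)} (hJ : IsJordanCurve khalPlane J) :
    ∀ x ∈ J, ExtAdj J x := by
  by_contra hcon
  push_neg at hcon
  obtain ⟨b0, hb0J, hb0⟩ := hcon
  obtain ⟨z, hzJ, hzgood⟩ := exists_good hJ
  have hUG : IsOpen (⋃ g ∈ {x : ℤ × ℤ | x ∈ J ∧ ExtAdj J x}, kNhd g) :=
    isOpen_biUnion (fun g _ => isOpen_kNhd g)
  have hUB : IsOpen (⋃ g ∈ {x : ℤ × ℤ | x ∈ J ∧ ¬ ExtAdj J x}, kNhd g) :=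
    isOpen_biUnion (fun g _ => isOpen_kNhd g)
  obtain ⟨y, hyJ, hyG, hyB⟩ := isPreconnected_J hJ _ _ hUG hUB
    (by
      intro x hx
      by_cases hxg : ExtAdj J x
      · exact Or.inl (Set.mem_biUnion ⟨hx, hxg⟩ (self_mem_kNhd x))
      · exact Or.inr (Set.mem_biUnion ⟨hx, hxg⟩ (self_mem_kNhd x)))
    ⟨z, hzJ, Set.mem_biUnion ⟨hzJ, hzgood⟩ (self_mem_kNhd z)⟩
    ⟨b0, hb0J, Set.mem_biUnion ⟨hb0J, hb0⟩ (self_mem_kNhd b0)⟩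
  obtain ⟨g, ⟨hgJ, hgGood⟩, hyg⟩ := Set.mem_iUnion₂.mp hyG
  obtain ⟨b, ⟨hbJ, hbBad⟩, hyb⟩ := Set.mem_iUnion₂.mp hyB
  have hyGood : ExtAdj J y := by
    by_cases hygq : y = g
    · exact hygq ▸ hgGood
    · exact prop_step hJ hgJ hyJ hygq (Or.inl hyg) hgGood
  by_cases hybq : b = y
  · exact hbBad (hybq ▸ hyGood)
  · exact hbBad (prop_step hJ hyJ hbJ hybq (Or.inr hyb) hyGood)

end S17
namespace S17

attribute [local instance 2000] khal khalPlane

lemma main (J K : Set (ℤ × ℤ)) (hJ : IsJordanCurve khalPlane J)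
    (hK : IsJordanCurve khalPlane K) (h : K ⊆ J ∪ jInterior J) :
    jInterior K ⊆ jInterior J := by
  intro x hx
  obtain ⟨S, hSmem, hxS⟩ := hx
  obtain ⟨p, hpK, hSeq, hSfin⟩ := hSmem
  subst hSeq
  have hxK : x ∉ K := connectedComponentIn_subset _ _ hxS
  have hSx : connectedComponentIn Kᶜ p = connectedComponentIn Kᶜ x :=
    connectedComponentIn_eq hxS
  rw [hSx] at hSfin
  by_cases hxJ : x ∈ J
  · exfalso
    obtain ⟨e, heJ, hpre, hinf⟩ := good_all hJ x hxJ
    have heK : e ∉ K := by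
      intro heK
      rcases h heK with h1 | h1
      · exact heJ h1
      · obtain ⟨C, ⟨p', hp', hCeq, hCfin⟩, heC⟩ := h1
        subst hCeq
        rw [connectedComponentIn_eq heC] at hCfin
        exact hinf hCfin
    have hdisj : connectedComponentIn Jᶜ e ⊆ Kᶜ := by
      intro k hk hkK
      have hkJ : k ∉ J := connectedComponentIn_subset _ _ hk
      rcases h hkK with h1 | h1
      · exact hkJ h1
      · obtain ⟨C, ⟨p', hp', hCeq, hCfin⟩, hkC⟩ := h1
        subst hCeq
        rw [connectedComponentIn_eq hkC] at hCfin
        rw [connectedComponentIn_eq hk] at hinf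
        exact hinf hCfin
    have hsub2 : ({x, e} : Set (ℤ × ℤ)) ⊆ Kᶜ := by
      rintro z (rfl | hz)
      · exact hxK
      · simp only [Set.mem_singleton_iff] at hz; subst hz; exact heK
    have heS : e ∈ connectedComponentIn Kᶜ x :=
      hpre.subset_connectedComponentIn (Set.mem_insert _ _) hsub2
        (Set.mem_insert_iff.mpr (Or.inr rfl))
    have hKxe : connectedComponentIn Kᶜ x = connectedComponentIn Kᶜ e :=
      connectedComponentIn_eq heS
    have hJe_sub : connectedComponentIn Jᶜ e ⊆ connectedComponentIn Kᶜ e :=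
      isPreconnected_connectedComponentIn.subset_connectedComponentIn
        (mem_connectedComponentIn heJ) hdisj
    have hbig : (connectedComponentIn Kᶜ e).Infinite := hinf.mono hJe_sub
    rw [← hKxe] at hbig
    exact hbig hSfin
  · have hxJc : x ∈ (Jᶜ : Set (ℤ × ℤ)) := hxJ
    by_cases hTK : ∃ k ∈ connectedComponentIn Jᶜ x, k ∈ K
    · obtain ⟨k, hkT, hkK⟩ := hTK
      have hkJ : k ∉ J := connectedComponentIn_subset _ _ hkT
      rcases h hkK with h1 | h1
      · exact absurd h1 hkJ
      · obtain ⟨C, ⟨p', hp', hCeq, hCfin⟩, hkC⟩ := h1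
        subst hCeq
        refine Set.mem_sUnion.mpr ⟨connectedComponentIn Jᶜ x, ⟨x, hxJ, rfl, ?_⟩,
          mem_connectedComponentIn hxJc⟩
        rw [connectedComponentIn_eq hkT, ← connectedComponentIn_eq hkC]
        exact hCfin
    · push_neg at hTK
      have hsub : connectedComponentIn Jᶜ x ⊆ Kᶜ := fun k hk => hTK k hk
      have h5 : connectedComponentIn Jᶜ x ⊆ connectedComponentIn Kᶜ x :=
        isPreconnected_connectedComponentIn.subset_connectedComponentIn
          (mem_connectedComponentIn hxJc) hsub
      exact Set.mem_sUnion.mpr ⟨connectedComponentIn Jᶜ x,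
        ⟨x, hxJ, rfl, hSfin.subset h5⟩, mem_connectedComponentIn hxJc⟩

end S17

/-- If a Jordan curve `K` lies inside `J ∪ int(J)`, then `int(K) ⊆ int(J)`. -/
theorem stmt17 (J K : Set (ℤ × ℤ)) (hJ : IsJordanCurve khalPlane J)
    (hK : IsJordanCurve khalPlane K) (h : K ⊆ J ∪ jInterior J) :
    jInterior K ⊆ jInterior J :=
  S17.main J K hJ hK h
end

section
/- If p is a point in the interior of a digital Jordan curve J in the Khalimsky plane and A(p) ∩ J is a proper nonempty connected subset of A(p), then p is a weak point of int(J); in particular, if p is pure then A(p) \ J is a COTS-arc and hence contractible. -/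
open Set

/-- A weak point of a subset `S` of the Khalimsky plane: the punctured minimal open
neighborhood or the punctured closure, intersected with `S`, is contractible. -/
def IsWeakPt (S : Set (ℤ × ℤ)) (p : ℤ × ℤ) : Prop :=
  @ContractibleSpace (↥((minOpenNhd khalPlane p \ {p}) ∩ S))
      (TopologicalSpace.induced Subtype.val khalPlane) ∨
  @ContractibleSpace (↥((@closure _ khalPlane {p} \ {p}) ∩ S))
      (TopologicalSpace.induced Subtype.val khalPlane)
section General
variable {X : Type*} {Y : Type*}

theorem mem_minOpenNhd_self (t : TopologicalSpace X) (x : X) : x ∈ minOpenNhd t x := by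
  intro U hU; exact hU.2

theorem minOpenNhd_subset (t : TopologicalSpace X) {x : X} {U : Set X}
    (hU : t.IsOpen U) (hx : x ∈ U) : minOpenNhd t x ⊆ U :=
  Set.sInter_subset_of_mem ⟨hU, hx⟩

theorem specLE_refl (t : TopologicalSpace X) (x : X) : specLE t x x := subset_rfl

theorem mem_minOpenNhd_of_specLE {t : TopologicalSpace X} {x y : X} (h : specLE t x y) :
    x ∈ minOpenNhd t y := h (mem_minOpenNhd_self t x)

theorem specLE_of_mem_minOpenNhd {t : TopologicalSpace X} {x y : X}
    (ho : t.IsOpen (minOpenNhd t y)) (h : x ∈ minOpenNhd t y) : specLE t x y :=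
  minOpenNhd_subset t ho h

/-- closure of a singleton. -/
theorem mem_closure_singleton' {t : TopologicalSpace X} {p q : X} :
    q ∈ @closure X t {p} ↔ p ∈ minOpenNhd t q := by
  letI := t
  constructor
  · intro h U hU
    have := (mem_closure_iff).1 h U hU.1 hU.2
    rcases this with ⟨r, hr1, hr2⟩
    rcases Set.mem_singleton_iff.1 hr2 with rfl
    exact hr1
  · intro h
    rw [mem_closure_iff]
    intro o ho hq
    exact ⟨p, h o ⟨ho, hq⟩, rfl⟩

/-- a spec-comparable pair is preconnected. -/
theorem isPreconnected_pair {t : TopologicalSpace X} {x y : X}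
    (h : specLE t x y ∨ specLE t y x) : @IsPreconnected X t {x, y} := by
  rcases h with h | h
  · have hy : y ∈ @closure X t {x} := mem_closure_singleton'.2 (mem_minOpenNhd_of_specLE h)
    refine (@isPreconnected_singleton X t x).subset_closure ?_ ?_
    · simp
    · intro z hz; rcases hz with rfl | rfl
      · exact subset_closure rfl
      · exact hy
  · have hx : x ∈ @closure X t {y} := mem_closure_singleton'.2 (mem_minOpenNhd_of_specLE h)
    have : ({x, y} : Set X) = {y, x} := by ext z; simp [or_comm]
    rw [this]
    refine (@isPreconnected_singleton X t y).subset_closure ?_ ?_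
    · simp
    · intro z hz; rcases hz with rfl | rfl
      · exact subset_closure rfl
      · exact hx

/-- In the subtype topology, minimal open nhds are preimages. -/
theorem minOpenNhd_induced {t : TopologicalSpace X} (S : Set X) (z : S) :
    minOpenNhd (TopologicalSpace.induced Subtype.val t) z
      = Subtype.val ⁻¹' (minOpenNhd t z.val) := by
  apply subset_antisymm
  · intro w hw
    intro U hU
    exact hw (Subtype.val ⁻¹' U) ⟨⟨U, hU.1, rfl⟩, hU.2⟩
  · intro w hw V hV
    obtain ⟨U, hU, rfl⟩ := hV.1
    exact hw U ⟨hU, hV.2⟩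

theorem specLE_induced_of {t : TopologicalSpace X} {S : Set X} {z w : S}
    (h : specLE t z.val w.val) :
    specLE (TopologicalSpace.induced Subtype.val t) z w := by
  rw [specLE, minOpenNhd_induced, minOpenNhd_induced]
  exact fun a ha => h ha

end General

section FiniteSpaces
variable {X : Type*} {Y : Type*}

theorem isOpen_minOpenNhd [Finite X] (t : TopologicalSpace X) (x : X) :
    t.IsOpen (minOpenNhd t x) := by
  have : {U : Set X | t.IsOpen U ∧ x ∈ U}.Finite := Set.toFinite _
  exact Set.Finite.isOpen_sInter this (fun U hU => hU.1)

theorem mem_minOpenNhd_iff_specLE [Finite X] {t : TopologicalSpace X} {x y : X} :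
    x ∈ minOpenNhd t y ↔ specLE t x y :=
  ⟨specLE_of_mem_minOpenNhd (isOpen_minOpenNhd t y), mem_minOpenNhd_of_specLE⟩

theorem continuous_of_specLE_mono [Finite X] {t : TopologicalSpace X} {t' : TopologicalSpace Y}
    {f : X → Y} (h : ∀ a b, specLE t a b → specLE t' (f a) (f b)) :
    @Continuous X Y t t' f := by
  rw [@continuous_def]
  intro U hU
  have : f ⁻¹' U = ⋃ x ∈ f ⁻¹' U, minOpenNhd t x := by
    apply subset_antisymm
    · intro x hx; exact Set.mem_biUnion hx (mem_minOpenNhd_self t x)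
    · intro y hy
      obtain ⟨x, hx, hyx⟩ := Set.mem_iUnion₂.1 hy
      have hle : specLE t y x := mem_minOpenNhd_iff_specLE.1 hyx
      have : f y ∈ minOpenNhd t' (f x) := mem_minOpenNhd_of_specLE (h _ _ hle)
      exact minOpenNhd_subset t' hU hx this
  rw [this]
  exact isOpen_biUnion (fun x _ => isOpen_minOpenNhd t x)

open unitInterval in
/-- McCord-type homotopy: pointwise spec-comparable maps are homotopic. -/
theorem homotopic_of_specLE {t' : TopologicalSpace Y} {X : Type*} [TopologicalSpace X]
    (f g : @ContinuousMap X Y _ t')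
    (h : ∀ x, specLE t' (f x) (g x)) : @ContinuousMap.Homotopic X Y _ t' f g := by
  refine ⟨⟨⟨fun q => if q.1 = 1 then g q.2 else f q.2, ?_⟩, ?_, ?_⟩⟩
  · rw [@continuous_def]
    intro U hU
    have key : (fun q : I × X => if q.1 = 1 then g q.2 else f q.2) ⁻¹' U
        = ((Set.Iio (1 : I)) ×ˢ (f ⁻¹' U)) ∪ (Set.univ ×ˢ (f ⁻¹' U ∩ g ⁻¹' U)) := by
      ext ⟨s, x⟩
      by_cases hs : s = 1
      · subst hs
        simp only [Set.mem_preimage, if_pos rfl, Set.mem_union, Set.mem_prod, Set.mem_Iio]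
        constructor
        · intro hg
          have hf : f x ∈ U := by
            have : minOpenNhd t' (g x) ⊆ U := minOpenNhd_subset t' hU hg
            exact this (h x (mem_minOpenNhd_self t' (f x)))
          exact Or.inr ⟨trivial, hf, hg⟩
        · rintro (⟨h1, _⟩ | ⟨_, _, hg⟩)
          · exact absurd h1 (lt_irrefl _)
          · exact hg
      · have hlt : s < 1 := lt_of_le_of_ne (unitInterval.le_one s) hs
        simp only [Set.mem_preimage, if_neg hs, Set.mem_union, Set.mem_prod, Set.mem_Iio]
        constructor
        · intro hf; exact Or.inl ⟨hlt, hf⟩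
        · rintro (⟨_, hf⟩ | ⟨_, hf, _⟩) <;> exact hf
    rw [key]
    exact ((isOpen_Iio).prod (f.continuous.isOpen_preimage U hU)).union
      (isOpen_univ.prod ((f.continuous.isOpen_preimage U hU).inter
        (g.continuous.isOpen_preimage U hU)))
  · intro x
    show (if (0:unitInterval) = 1 then g x else f x) = f x
    rw [if_neg]
    exact fun hc => zero_ne_one (congrArg Subtype.val hc)
  · intro x
    show (if (1:unitInterval) = 1 then g x else f x) = g x
    rw [if_pos rfl]

theorem contractible_of_subsingleton (t : TopologicalSpace X) [Subsingleton X] (x : X) :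
    @ContractibleSpace X t := by
  rw [@contractible_iff_id_nullhomotopic]
  refine ⟨x, ?_⟩
  have : (ContinuousMap.id X) = (@ContinuousMap.const X X t t x) := by
    ext z; exact Subsingleton.elim _ _
  rw [this]

end FiniteSpaces
section Khal

theorem khal_isOpen_odd {n : ℤ} (hn : Odd n) : khal.IsOpen {n} :=
  TopologicalSpace.isOpen_generateFrom_of_mem ⟨n, Or.inl ⟨hn, rfl⟩⟩

theorem khal_isOpen_even {n : ℤ} (hn : Even n) : khal.IsOpen ({n - 1, n, n + 1} : Set ℤ) :=
  TopologicalSpace.isOpen_generateFrom_of_mem ⟨n, Or.inr ⟨hn, rfl⟩⟩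

theorem khal_even_subset {n : ℤ} (hn : Even n) {U : Set ℤ} (hU : khal.IsOpen U) (hnU : n ∈ U) :
    ({n - 1, n, n + 1} : Set ℤ) ⊆ U := by
  have hU' : TopologicalSpace.GenerateOpen
      {s : Set ℤ | ∃ m : ℤ, (Odd m ∧ s = {m}) ∨ (Even m ∧ s = {m - 1, m, m + 1})} U := hU
  clear hU
  induction hU' with
  | basic s hs =>
    rcases hs with ⟨m, ⟨hmodd, rfl⟩ | ⟨hmeven, rfl⟩⟩
    · rcases Set.mem_singleton_iff.1 hnU with rfl
      rw [Int.even_iff] at hn; rw [Int.odd_iff] at hmodd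
      exfalso; omega
    · have hnm : n = m := by
        rw [Int.even_iff] at hn hmeven
        simp only [Set.mem_insert_iff, Set.mem_singleton_iff] at hnU
        rcases hnU with h | h | h
        · exfalso; omega
        · exact h
        · exfalso; omega
      subst hnm
      exact subset_rfl
  | univ => exact Set.subset_univ _
  | inter s t _ _ ihs iht => exact Set.subset_inter (ihs hnU.1) (iht hnU.2)
  | sUnion S _ ih =>
    obtain ⟨s, hsS, hns⟩ := hnU
    exact (ih s hsS hns).trans (Set.subset_sUnion_of_mem hsS)

theorem minOpenNhd_khal_odd {n : ℤ} (hn : Odd n) : minOpenNhd khal n = {n} := by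
  apply subset_antisymm
  · exact minOpenNhd_subset khal (khal_isOpen_odd hn) rfl
  · intro x hx
    rcases Set.mem_singleton_iff.1 hx with rfl
    exact mem_minOpenNhd_self khal x

theorem minOpenNhd_khal_even {n : ℤ} (hn : Even n) :
    minOpenNhd khal n = ({n - 1, n, n + 1} : Set ℤ) := by
  apply subset_antisymm
  · exact minOpenNhd_subset khal (khal_isOpen_even hn) (by simp)
  · intro x hx U hU
    exact khal_even_subset hn hU.1 hU.2 hx

theorem isOpen_minOpenNhd_khal (n : ℤ) : khal.IsOpen (minOpenNhd khal n) := by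
  rcases Int.even_or_odd n with h | h
  · rw [minOpenNhd_khal_even h]; exact khal_isOpen_even h
  · rw [minOpenNhd_khal_odd h]; exact khal_isOpen_odd h

theorem khal_nonempty_minOpen (n : ℤ) : (minOpenNhd khal n).Nonempty :=
  ⟨n, mem_minOpenNhd_self khal n⟩

theorem minOpenNhd_khalPlane (q : ℤ × ℤ) :
    minOpenNhd khalPlane q = (minOpenNhd khal q.1) ×ˢ (minOpenNhd khal q.2) := by
  apply subset_antisymm
  · apply minOpenNhd_subset khalPlane
    · exact @IsOpen.prod ℤ ℤ khal khal _ _ (isOpen_minOpenNhd_khal q.1) (isOpen_minOpenNhd_khal q.2)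
    · exact ⟨mem_minOpenNhd_self khal q.1, mem_minOpenNhd_self khal q.2⟩
  · intro x hx W hW
    obtain ⟨u, v, hu, hv, hqu, hqv, huv⟩ :=
      (@isOpen_prod_iff ℤ ℤ khal khal W).1 hW.1 q.1 q.2 hW.2
    exact huv ⟨minOpenNhd_subset khal hu hqu hx.1, minOpenNhd_subset khal hv hqv hx.2⟩

theorem isOpen_minOpenNhd_khalPlane (q : ℤ × ℤ) : khalPlane.IsOpen (minOpenNhd khalPlane q) := by
  rw [minOpenNhd_khalPlane]
  exact @IsOpen.prod ℤ ℤ khal khal _ _ (isOpen_minOpenNhd_khal q.1) (isOpen_minOpenNhd_khal q.2)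

/-- line specialization order, concretely. -/
def lineLE (m n : ℤ) : Prop := m = n ∨ (m % 2 ≠ 0 ∧ n % 2 = 0 ∧ (n = m + 1 ∨ n = m - 1))

theorem specLE_khal_iff {m n : ℤ} : specLE khal m n ↔ lineLE m n := by
  rcases Int.even_or_odd m with hm | hm <;> rcases Int.even_or_odd n with hn | hn
  · rw [specLE, minOpenNhd_khal_even hm, minOpenNhd_khal_even hn]
    constructor
    · intro h
      have h1 := h (show m - 1 ∈ _ by simp)
      have h2 := h (show m + 1 ∈ ({m-1,m,m+1} : Set ℤ) by simp)
      simp only [Set.mem_insert_iff, Set.mem_singleton_iff] at h1 h2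
      left; omega
    · intro h
      rcases h with rfl | ⟨h1, _, _⟩
      · exact subset_rfl
      · exfalso; rw [Int.even_iff] at hm; omega
  · rw [specLE, minOpenNhd_khal_even hm, minOpenNhd_khal_odd hn]
    constructor
    · intro h
      have h1 := h (show m - 1 ∈ _ by simp)
      have h2 := h (show m + 1 ∈ ({m-1,m,m+1} : Set ℤ) by simp)
      simp only [Set.mem_singleton_iff] at h1 h2
      exfalso; omega
    · intro h
      exfalso
      rw [Int.even_iff] at hm; rw [Int.odd_iff] at hn
      rcases h with rfl | ⟨h1, h2, _⟩ <;> omega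
  · rw [specLE, minOpenNhd_khal_odd hm, minOpenNhd_khal_even hn]
    rw [Int.odd_iff] at hm; rw [Int.even_iff] at hn
    constructor
    · intro h
      have h1 := h rfl
      simp only [Set.mem_insert_iff, Set.mem_singleton_iff] at h1
      right; exact ⟨by omega, hn, by omega⟩
    · intro h x hx
      rcases Set.mem_singleton_iff.1 hx with rfl
      rcases h with rfl | ⟨_, _, h⟩
      · simp
      · simp only [Set.mem_insert_iff, Set.mem_singleton_iff]; omega
  · rw [specLE, minOpenNhd_khal_odd hm, minOpenNhd_khal_odd hn]
    rw [Int.odd_iff] at hm; rw [Int.odd_iff] at hn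
    constructor
    · intro h
      have h1 := h rfl
      left; exact Set.mem_singleton_iff.1 h1
    · intro h
      rcases h with rfl | ⟨_, h2, _⟩
      · exact subset_rfl
      · exfalso; omega

theorem specLE_khalPlane_iff {q r : ℤ × ℤ} :
    specLE khalPlane q r ↔ lineLE q.1 r.1 ∧ lineLE q.2 r.2 := by
  rw [specLE, minOpenNhd_khalPlane, minOpenNhd_khalPlane,
    Set.prod_subset_prod_iff]
  constructor
  · intro h
    rcases h with ⟨h1, h2⟩ | h | h
    · exact ⟨specLE_khal_iff.1 h1, specLE_khal_iff.1 h2⟩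
    · exact absurd h (Set.Nonempty.ne_empty (khal_nonempty_minOpen q.1))
    · exact absurd h (Set.Nonempty.ne_empty (khal_nonempty_minOpen q.2))
  · intro h
    exact Or.inl ⟨specLE_khal_iff.2 h.1, specLE_khal_iff.2 h.2⟩

theorem mem_minOpenNhd_khalPlane_iff {q r : ℤ × ℤ} :
    q ∈ minOpenNhd khalPlane r ↔ specLE khalPlane q r :=
  ⟨specLE_of_mem_minOpenNhd (isOpen_minOpenNhd_khalPlane r), mem_minOpenNhd_of_specLE⟩

theorem adjacent_khalPlane_iff {q r : ℤ × ℤ} :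
    Adjacent khalPlane q r ↔ q ≠ r ∧
      ((lineLE q.1 r.1 ∧ lineLE q.2 r.2) ∨ (lineLE r.1 q.1 ∧ lineLE r.2 q.2)) := by
  rw [Adjacent, specLE_khalPlane_iff, specLE_khalPlane_iff]

theorem mem_closure_singleton_khalPlane {p q : ℤ × ℤ} :
    q ∈ @closure _ khalPlane {p} ↔ specLE khalPlane p q := by
  rw [mem_closure_singleton']
  exact mem_minOpenNhd_khalPlane_iff

end Khal
section Cyc

/-- x-offsets of the 8-cycle. -/
def dxo (i : ℤ) : ℤ :=
  if i % 8 = 0 then 1 else if i % 8 = 1 then 1 else if i % 8 = 2 then 0 else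
  if i % 8 = 3 then -1 else if i % 8 = 4 then -1 else if i % 8 = 5 then -1 else
  if i % 8 = 6 then 0 else 1

/-- y-offsets of the 8-cycle. -/
def dyo (i : ℤ) : ℤ :=
  if i % 8 = 0 then 0 else if i % 8 = 1 then 1 else if i % 8 = 2 then 1 else
  if i % 8 = 3 then 1 else if i % 8 = 4 then 0 else if i % 8 = 5 then -1 else
  if i % 8 = 6 then -1 else -1

/-- the 8-cycle around a point. -/
def cyc (p : ℤ × ℤ) (i : ℤ) : ℤ × ℤ := (p.1 + dxo i, p.2 + dyo i)

theorem dxy_spec (i : ℤ) :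
    (i % 8 = 0 ∧ dxo i = 1 ∧ dyo i = 0) ∨ (i % 8 = 1 ∧ dxo i = 1 ∧ dyo i = 1) ∨
    (i % 8 = 2 ∧ dxo i = 0 ∧ dyo i = 1) ∨ (i % 8 = 3 ∧ dxo i = -1 ∧ dyo i = 1) ∨
    (i % 8 = 4 ∧ dxo i = -1 ∧ dyo i = 0) ∨ (i % 8 = 5 ∧ dxo i = -1 ∧ dyo i = -1) ∨
    (i % 8 = 6 ∧ dxo i = 0 ∧ dyo i = -1) ∨ (i % 8 = 7 ∧ dxo i = 1 ∧ dyo i = -1) := by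
  have h : i % 8 = 0 ∨ i % 8 = 1 ∨ i % 8 = 2 ∨ i % 8 = 3 ∨ i % 8 = 4 ∨ i % 8 = 5 ∨
      i % 8 = 6 ∨ i % 8 = 7 := by omega
  rcases h with h|h|h|h|h|h|h|h <;> norm_num [dxo, dyo, h]

theorem cyc_congr (p : ℤ × ℤ) {i j : ℤ} (h : i % 8 = j % 8) : cyc p i = cyc p j := by
  unfold cyc dxo dyo; rw [h]

theorem cyc_inj (p : ℤ × ℤ) {i j : ℤ} (h : cyc p i = cyc p j) : i % 8 = j % 8 := by
  have h1 : dxo i = dxo j := by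
    have := congrArg Prod.fst h; simpa [cyc] using this
  have h2 : dyo i = dyo j := by
    have := congrArg Prod.snd h; simpa [cyc] using this
  rcases dxy_spec i with ⟨a1,a2,a3⟩|⟨a1,a2,a3⟩|⟨a1,a2,a3⟩|⟨a1,a2,a3⟩|⟨a1,a2,a3⟩|⟨a1,a2,a3⟩|⟨a1,a2,a3⟩|⟨a1,a2,a3⟩ <;>
    rcases dxy_spec j with ⟨b1,b2,b3⟩|⟨b1,b2,b3⟩|⟨b1,b2,b3⟩|⟨b1,b2,b3⟩|⟨b1,b2,b3⟩|⟨b1,b2,b3⟩|⟨b1,b2,b3⟩|⟨b1,b2,b3⟩ <;>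
    omega

theorem cyc_minOpen_mem {p : ℤ × ℤ} (hpp : p.1 % 2 = p.2 % 2) {i j : ℤ}
    (h : cyc p j ∈ minOpenNhd khalPlane (cyc p i)) :
    (j - i) % 8 = 0 ∨ (j - i) % 8 = 1 ∨ (j - i) % 8 = 7 := by
  have h' := specLE_khalPlane_iff.1 (mem_minOpenNhd_khalPlane_iff.1 h)
  simp only [cyc, lineLE] at h'
  rcases dxy_spec i with ⟨a1,a2,a3⟩|⟨a1,a2,a3⟩|⟨a1,a2,a3⟩|⟨a1,a2,a3⟩|⟨a1,a2,a3⟩|⟨a1,a2,a3⟩|⟨a1,a2,a3⟩|⟨a1,a2,a3⟩ <;>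
    rcases dxy_spec j with ⟨b1,b2,b3⟩|⟨b1,b2,b3⟩|⟨b1,b2,b3⟩|⟨b1,b2,b3⟩|⟨b1,b2,b3⟩|⟨b1,b2,b3⟩|⟨b1,b2,b3⟩|⟨b1,b2,b3⟩ <;>
    omega

theorem cyc_consec {p : ℤ × ℤ} (hpp : p.1 % 2 = p.2 % 2) (i : ℤ) :
    specLE khalPlane (cyc p i) (cyc p (i+1)) ∨ specLE khalPlane (cyc p (i+1)) (cyc p i) := by
  rw [specLE_khalPlane_iff, specLE_khalPlane_iff]
  simp only [cyc, lineLE]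
  rcases dxy_spec i with ⟨a1,a2,a3⟩|⟨a1,a2,a3⟩|⟨a1,a2,a3⟩|⟨a1,a2,a3⟩|⟨a1,a2,a3⟩|⟨a1,a2,a3⟩|⟨a1,a2,a3⟩|⟨a1,a2,a3⟩ <;>
    rcases dxy_spec (i+1) with ⟨b1,b2,b3⟩|⟨b1,b2,b3⟩|⟨b1,b2,b3⟩|⟨b1,b2,b3⟩|⟨b1,b2,b3⟩|⟨b1,b2,b3⟩|⟨b1,b2,b3⟩|⟨b1,b2,b3⟩ <;>
    omega

theorem mem_adjSet_iff {p q : ℤ × ℤ} :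
    q ∈ adjSet khalPlane p ↔ (¬(q.1 = p.1 ∧ q.2 = p.2)) ∧
      ((lineLE p.1 q.1 ∧ lineLE p.2 q.2) ∨ (lineLE q.1 p.1 ∧ lineLE q.2 p.2)) := by
  show Adjacent khalPlane p q ↔ _
  rw [adjacent_khalPlane_iff]
  constructor
  · rintro ⟨h1, h2⟩
    refine ⟨fun hc => h1 (Prod.ext hc.1.symm hc.2.symm), h2⟩
  · rintro ⟨h1, h2⟩
    refine ⟨fun hc => h1 ⟨(congrArg Prod.fst hc).symm, (congrArg Prod.snd hc).symm⟩, h2⟩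

theorem adjSet_pure {p : ℤ × ℤ} (hpp : p.1 % 2 = p.2 % 2) :
    adjSet khalPlane p = Set.range (cyc p) := by
  ext q
  rw [mem_adjSet_iff]
  simp only [lineLE]
  constructor
  · intro h
    have hu : q.1 = p.1 - 1 ∨ q.1 = p.1 ∨ q.1 = p.1 + 1 := by omega
    have hv : q.2 = p.2 - 1 ∨ q.2 = p.2 ∨ q.2 = p.2 + 1 := by omega
    have hne : ¬(q.1 = p.1 ∧ q.2 = p.2) := h.1
    have hq : q = (q.1, q.2) := rfl
    rcases hu with hu|hu|hu <;> rcases hv with hv|hv|hv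
    · exact ⟨5, Prod.ext (by norm_num [cyc, dxo]; omega) (by norm_num [cyc, dyo]; omega)⟩
    · exact ⟨4, Prod.ext (by norm_num [cyc, dxo]; omega) (by norm_num [cyc, dyo]; omega)⟩
    · exact ⟨3, Prod.ext (by norm_num [cyc, dxo]; omega) (by norm_num [cyc, dyo]; omega)⟩
    · exact ⟨6, Prod.ext (by norm_num [cyc, dxo]; omega) (by norm_num [cyc, dyo]; omega)⟩
    · exact absurd ⟨hu, hv⟩ hne
    · exact ⟨2, Prod.ext (by norm_num [cyc, dxo]; omega) (by norm_num [cyc, dyo]; omega)⟩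
    · exact ⟨7, Prod.ext (by norm_num [cyc, dxo]; omega) (by norm_num [cyc, dyo]; omega)⟩
    · exact ⟨0, Prod.ext (by norm_num [cyc, dxo]; omega) (by norm_num [cyc, dyo]; omega)⟩
    · exact ⟨1, Prod.ext (by norm_num [cyc, dxo]; omega) (by norm_num [cyc, dyo]; omega)⟩
  · rintro ⟨i, rfl⟩
    simp only [cyc]
    rcases dxy_spec i with ⟨a1,a2,a3⟩|⟨a1,a2,a3⟩|⟨a1,a2,a3⟩|⟨a1,a2,a3⟩|⟨a1,a2,a3⟩|⟨a1,a2,a3⟩|⟨a1,a2,a3⟩|⟨a1,a2,a3⟩ <;>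
      omega

theorem minOpen_punct_pure_even {p : ℤ × ℤ} (h1 : p.1 % 2 = 0) (h2 : p.2 % 2 = 0) :
    minOpenNhd khalPlane p \ {p} = adjSet khalPlane p := by
  ext q
  have he1 : Even p.1 := Int.even_iff.2 h1
  have he2 : Even p.2 := Int.even_iff.2 h2
  rw [Set.mem_diff, minOpenNhd_khalPlane, minOpenNhd_khal_even he1, minOpenNhd_khal_even he2,
    mem_adjSet_iff]
  simp only [Set.mem_prod, Set.mem_insert_iff, Set.mem_singleton_iff, lineLE, Prod.ext_iff]
  constructor
  · rintro ⟨⟨hq1, hq2⟩, hq3⟩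
    constructor
    · intro hc; exact hq3 ⟨hc.1, hc.2⟩
    · omega
  · rintro ⟨hne, h⟩
    refine ⟨⟨by omega, by omega⟩, fun hc => hne ⟨hc.1, hc.2⟩⟩

theorem closure_punct_pure_odd {p : ℤ × ℤ} (h1 : p.1 % 2 ≠ 0) (h2 : p.2 % 2 ≠ 0) :
    @closure _ khalPlane {p} \ {p} = adjSet khalPlane p := by
  ext q
  rw [Set.mem_diff, mem_closure_singleton_khalPlane, specLE_khalPlane_iff, mem_adjSet_iff]
  simp only [lineLE, Set.mem_singleton_iff, Prod.ext_iff]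
  constructor
  · rintro ⟨⟨ha, hb⟩, hq3⟩
    exact ⟨fun hc => hq3 ⟨hc.1, hc.2⟩, by omega⟩
  · rintro ⟨hne, h⟩
    refine ⟨⟨by omega, by omega⟩, fun hc => hne ⟨hc.1, hc.2⟩⟩

end Cyc
section Run

/-- A run of `n` consecutive points on the 8-cycle around `p`. -/
def Wrun (p : ℤ × ℤ) (s0 n : ℤ) : Set (ℤ × ℤ) := cyc p '' (Set.Ico s0 (s0 + n))

theorem wrun_index {p : ℤ × ℤ} {s0 n : ℤ} {q : ℤ × ℤ} (h : q ∈ Wrun p s0 n) :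
    ∃ t, 0 ≤ t ∧ t < n ∧ cyc p (s0 + t) = q := by
  obtain ⟨s, hs, rfl⟩ := h
  rw [Set.mem_Ico] at hs
  exact ⟨s - s0, by omega, by omega, by rw [show s0 + (s - s0) = s by ring]⟩

theorem wrun_mem {p : ℤ × ℤ} {s0 n t : ℤ} (h1 : 0 ≤ t) (h2 : t < n) :
    cyc p (s0 + t) ∈ Wrun p s0 n :=
  ⟨s0 + t, ⟨by omega, by omega⟩, rfl⟩

theorem wrun_finite (p : ℤ × ℤ) (s0 n : ℤ) : (Wrun p s0 n).Finite :=
  (Set.finite_Ico _ _).image _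

/-- Master separation lemma along a run. -/
theorem run_separated {p : ℤ × ℤ} (hpp : p.1 % 2 = p.2 % 2) {s0 n : ℤ} (hn : n ≤ 7)
    {K : Set (ℤ × ℤ)} (hK : @IsPreconnected _ khalPlane K) (hKW : K ⊆ Wrun p s0 n)
    {ta tm tb : ℤ} (h0 : 0 ≤ ta) (h1 : ta < tm) (h2 : tm < tb) (h3 : tb < n)
    (ha : cyc p (s0 + ta) ∈ K) (hb : cyc p (s0 + tb) ∈ K)
    (hm : cyc p (s0 + tm) ∉ K) : False := by
  letI : TopologicalSpace (ℤ × ℤ) := khalPlane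
  set O1 := ⋃ t ∈ Set.Ico (0:ℤ) tm, minOpenNhd khalPlane (cyc p (s0 + t)) with hO1
  set O2 := ⋃ t ∈ Set.Ioo tm n, minOpenNhd khalPlane (cyc p (s0 + t)) with hO2
  have hopen1 : khalPlane.IsOpen O1 :=
    isOpen_biUnion (fun t _ => isOpen_minOpenNhd_khalPlane _)
  have hopen2 : khalPlane.IsOpen O2 :=
    isOpen_biUnion (fun t _ => isOpen_minOpenNhd_khalPlane _)
  have hcov : K ⊆ O1 ∪ O2 := by
    intro x hx
    obtain ⟨t, ht0, htn, htx⟩ := wrun_index (hKW hx)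
    have htm : t ≠ tm := by
      intro hc; subst hc; rw [htx] at hm; exact hm hx
    rcases lt_or_gt_of_ne htm with hlt | hgt
    · exact Or.inl (Set.mem_biUnion (Set.mem_Ico.2 ⟨ht0, hlt⟩)
        (htx ▸ mem_minOpenNhd_self khalPlane (cyc p (s0 + t))))
    · exact Or.inr (Set.mem_biUnion (Set.mem_Ioo.2 ⟨hgt, htn⟩)
        (htx ▸ mem_minOpenNhd_self khalPlane (cyc p (s0 + t))))
  have hne1 : (K ∩ O1).Nonempty := by
    exact ⟨cyc p (s0 + ta), ha, Set.mem_biUnion (Set.mem_Ico.2 ⟨h0, h1⟩)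
      (mem_minOpenNhd_self khalPlane _)⟩
  have hne2 : (K ∩ O2).Nonempty := by
    exact ⟨cyc p (s0 + tb), hb, Set.mem_biUnion (Set.mem_Ioo.2 ⟨h2, h3⟩)
      (mem_minOpenNhd_self khalPlane _)⟩
  obtain ⟨x, hxK, hx1, hx2⟩ := hK O1 O2 hopen1 hopen2 hcov hne1 hne2
  obtain ⟨t, ht0, htn, htx⟩ := wrun_index (hKW hxK)
  obtain ⟨t1, ht1, hxt1⟩ := Set.mem_iUnion₂.1 hx1
  obtain ⟨t2, ht2, hxt2⟩ := Set.mem_iUnion₂.1 hx2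
  rw [← htx] at hxt1 hxt2
  have e1 := cyc_minOpen_mem hpp hxt1
  have e2 := cyc_minOpen_mem hpp hxt2
  rw [Set.mem_Ico] at ht1; rw [Set.mem_Ioo] at ht2
  have htm : t = tm := by omega
  subst htm
  rw [htx] at hm; exact hm hxK

theorem wrun_connected {p : ℤ × ℤ} (hpp : p.1 % 2 = p.2 % 2) (s0 : ℤ) :
    ∀ n : ℤ, 1 ≤ n → @IsConnected _ khalPlane (Wrun p s0 n) := by
  letI : TopologicalSpace (ℤ × ℤ) := khalPlane
  have key : ∀ k : ℕ, IsConnected (Wrun p s0 ((k : ℤ) + 1)) := by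
    intro k
    induction k with
    | zero =>
      have : Wrun p s0 ((0 : ℕ) + 1 : ℤ) = {cyc p s0} := by
        apply Set.Subset.antisymm
        · rintro q ⟨s, hs, rfl⟩
          rw [Set.mem_Ico] at hs
          have : s = s0 := by omega
          subst this; rfl
        · rintro q hq
          rcases Set.mem_singleton_iff.1 hq with rfl
          exact ⟨s0, Set.mem_Ico.2 ⟨le_refl _, by omega⟩, rfl⟩
      rw [this]
      exact isConnected_singleton
    | succ k ih =>
      set n : ℤ := (k : ℤ) + 1 with hn
      have hn1 : 1 ≤ n := by omega
      have hsplit : Wrun p s0 (((k+1 : ℕ) : ℤ) + 1)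
          = Wrun p s0 n ∪ {cyc p (s0 + n - 1), cyc p (s0 + n)} := by
        apply Set.Subset.antisymm
        · rintro q ⟨s, hs, rfl⟩
          rw [Set.mem_Ico] at hs
          rcases lt_or_ge s (s0 + n) with hlt | hge
          · exact Or.inl ⟨s, Set.mem_Ico.2 ⟨hs.1, hlt⟩, rfl⟩
          · have : s = s0 + n := by push_cast at hs; omega
            subst this
            exact Or.inr (Or.inr rfl)
        · rintro q hq
          rcases hq with ⟨s, hs, rfl⟩ | hq
          · rw [Set.mem_Ico] at hs
            exact ⟨s, Set.mem_Ico.2 ⟨hs.1, by push_cast; omega⟩, rfl⟩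
          · rcases hq with rfl | rfl
            · exact ⟨s0 + n - 1, Set.mem_Ico.2 ⟨by omega, by push_cast; omega⟩, rfl⟩
            · exact ⟨s0 + n, Set.mem_Ico.2 ⟨by omega, by push_cast; omega⟩, rfl⟩
      rw [hsplit]
      have hpair : IsConnected {cyc p (s0 + n - 1), cyc p (s0 + n)} := by
        refine ⟨⟨cyc p (s0 + n - 1), Or.inl rfl⟩, ?_⟩
        have h2 := cyc_consec hpp (s0 + n - 1)
        rw [show s0 + n - 1 + 1 = s0 + n by ring] at h2
        exact isPreconnected_pair h2
      refine IsConnected.union ?_ ih hpair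
      exact ⟨cyc p (s0 + n - 1), ⟨s0 + n - 1, Set.mem_Ico.2 ⟨by omega, by omega⟩, rfl⟩,
        Or.inl rfl⟩
  intro n hn
  have hcast : ((n - 1).toNat : ℤ) + 1 = n := by omega
  have := key (n - 1).toNat
  rwa [hcast] at this

theorem cyc_ne_of_window {p : ℤ × ℤ} {i j : ℤ} (h : i % 8 ≠ j % 8) : cyc p i ≠ cyc p j :=
  fun hc => h (cyc_inj p hc)

/-- separation of connected components inside a run (subspace version). -/
theorem wrun_comp_ne {p : ℤ × ℤ} (hpp : p.1 % 2 = p.2 % 2) {s0 n : ℤ} (hn : n ≤ 7)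
    {y a b : ↥(Wrun p s0 n)} {ta tm tb : ℤ}
    (h0 : 0 ≤ ta) (h1 : ta < tm) (h2 : tm < tb) (h3 : tb < n)
    (hy : y.val = cyc p (s0 + tm)) (hA : a.val = cyc p (s0 + ta)) (hB : b.val = cyc p (s0 + tb)) :
    @connectedComponentIn _ (TopologicalSpace.induced Subtype.val khalPlane) {y}ᶜ a
      ≠ @connectedComponentIn _ (TopologicalSpace.induced Subtype.val khalPlane) {y}ᶜ b := by
  intro hcomp
  letI : TopologicalSpace (ℤ × ℤ) := khalPlane
  letI tW : TopologicalSpace ↥(Wrun p s0 n) := TopologicalSpace.induced Subtype.val khalPlane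
  have hay : a ≠ y := by
    intro hc
    rw [hc] at hA
    rw [hA] at hy
    exact cyc_ne_of_window (p := p) (by omega) hy.symm
  have hby : b ≠ y := by
    intro hc
    rw [hc] at hB
    rw [hB] at hy
    exact cyc_ne_of_window (p := p) (by omega) hy.symm
  have haC : a ∈ ({y}ᶜ : Set ↥(Wrun p s0 n)) := hay
  have hbC : b ∈ ({y}ᶜ : Set ↥(Wrun p s0 n)) := hby
  have hbs : b ∈ @connectedComponentIn _ tW {y}ᶜ a := by
    rw [hcomp]
    exact mem_connectedComponentIn hbC
  have has : a ∈ @connectedComponentIn _ tW {y}ᶜ a := mem_connectedComponentIn haC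
  have hsub : @connectedComponentIn _ tW {y}ᶜ a ⊆ {y}ᶜ := connectedComponentIn_subset _ _
  have hpre : @IsPreconnected _ tW (@connectedComponentIn _ tW {y}ᶜ a) :=
    isPreconnected_connectedComponentIn
  have hcont : @Continuous _ _ tW khalPlane (Subtype.val) := continuous_induced_dom
  have hpre' : @IsPreconnected _ khalPlane (Subtype.val '' (@connectedComponentIn _ tW {y}ᶜ a)) :=
    hpre.image _ hcont.continuousOn
  refine run_separated (s0 := s0) (n := n) hpp hn hpre' ?_ h0 h1 h2 h3
    ⟨a, has, hA⟩ ⟨b, hbs, hB⟩ ?_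
  · rintro x ⟨z, hz, rfl⟩
    exact z.2
  · rintro ⟨z, hz, hzv⟩
    have : z = y := Subtype.ext (by rw [hzv, hy])
    rw [this] at hz
    exact (hsub hz) rfl

end Run
section Cots

theorem wrun_isCOTS {p : ℤ × ℤ} (hpp : p.1 % 2 = p.2 % 2) {s0 n : ℤ} (h1 : 1 ≤ n) (h7 : n ≤ 7) :
    IsCOTS (TopologicalSpace.induced (Subtype.val : ↥(Wrun p s0 n) → ℤ × ℤ) khalPlane) := by
  letI : TopologicalSpace (ℤ × ℤ) := khalPlane
  constructor
  · exact Subtype.connectedSpace (wrun_connected hpp s0 n h1)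
  · intro Y hY
    obtain ⟨u, v, w, huv, huw, hvw, rfl⟩ := Set.ncard_eq_three.1 hY
    obtain ⟨tu, htu0, htun, htu⟩ := wrun_index u.2
    obtain ⟨tv, htv0, htvn, htv⟩ := wrun_index v.2
    obtain ⟨tw, htw0, htwn, htw⟩ := wrun_index w.2
    have htuv : tu ≠ tv := by
      intro hc; rw [hc, htv] at htu; exact huv (Subtype.ext htu.symm)
    have htuw : tu ≠ tw := by
      intro hc; rw [hc, htw] at htu; exact huw (Subtype.ext htu.symm)
    have htvw : tv ≠ tw := by
      intro hc; rw [hc, htw] at htv; exact hvw (Subtype.ext htv.symm)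
    have memu : u ∈ ({u, v, w} : Set _) := by simp
    have memv : v ∈ ({u, v, w} : Set _) := by simp
    have memw : w ∈ ({u, v, w} : Set _) := by simp
    rcases lt_trichotomy tu tv with h12 | h12 | h12
    · rcases lt_trichotomy tv tw with h23 | h23 | h23
      · -- tu < tv < tw : median v
        exact ⟨v, memv, u, ⟨memu, by simpa using huv⟩, w, ⟨memw, by simpa using hvw.symm⟩,
          wrun_comp_ne hpp h7 htu0 h12 h23 htwn htv.symm htu.symm htw.symm⟩
      · exact absurd h23 htvw
      · rcases lt_trichotomy tu tw with h13 | h13 | h13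
        · -- tu < tw < tv : median w
          exact ⟨w, memw, u, ⟨memu, by simpa using huw⟩, v, ⟨memv, by simpa using hvw⟩,
            wrun_comp_ne hpp h7 htu0 h13 h23 htvn htw.symm htu.symm htv.symm⟩
        · exact absurd h13 htuw
        · -- tw < tu < tv : median u
          exact ⟨u, memu, w, ⟨memw, by simpa using huw.symm⟩, v, ⟨memv, by simpa using huv.symm⟩,
            wrun_comp_ne hpp h7 htw0 h13 h12 htvn htu.symm htw.symm htv.symm⟩
    · exact absurd h12 htuv
    · rcases lt_trichotomy tu tw with h13 | h13 | h13
      · -- tv < tu < tw : median u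
        exact ⟨u, memu, v, ⟨memv, by simpa using huv.symm⟩, w, ⟨memw, by simpa using huw.symm⟩,
          wrun_comp_ne hpp h7 htv0 h12 h13 htwn htu.symm htv.symm htw.symm⟩
      · exact absurd h13 htuw
      · rcases lt_trichotomy tv tw with h23 | h23 | h23
        · -- tv < tw < tu : median w
          exact ⟨w, memw, v, ⟨memv, by simpa using hvw⟩, u, ⟨memu, by simpa using huw⟩,
            wrun_comp_ne hpp h7 htv0 h23 h13 htun htw.symm htv.symm htu.symm⟩
        · exact absurd h23 htvw
        · -- tw < tv < tu : median v
          exact ⟨v, memv, w, ⟨memw, by simpa using hvw.symm⟩, u, ⟨memu, by simpa using huv⟩,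
            wrun_comp_ne hpp h7 htw0 h23 h12 htun htv.symm htw.symm htu.symm⟩

open scoped Classical in
noncomputable def widx (p : ℤ × ℤ) (s0 n : ℤ) (q : ℤ × ℤ) : ℤ :=
  if h : ∃ t, 0 ≤ t ∧ t < n ∧ cyc p (s0 + t) = q then h.choose else 0

theorem widx_spec {p : ℤ × ℤ} {s0 n : ℤ} {q : ℤ × ℤ} (h : q ∈ Wrun p s0 n) :
    0 ≤ widx p s0 n q ∧ widx p s0 n q < n ∧ cyc p (s0 + widx p s0 n q) = q := by
  have he := wrun_index h
  unfold widx
  rw [dif_pos he]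
  exact he.choose_spec

theorem wrun_contractible {p : ℤ × ℤ} (hpp : p.1 % 2 = p.2 % 2) {s0 n : ℤ}
    (h1 : 1 ≤ n) (h7 : n ≤ 7) :
    @ContractibleSpace ↥(Wrun p s0 n)
      (TopologicalSpace.induced Subtype.val khalPlane) := by
  letI : TopologicalSpace (ℤ × ℤ) := khalPlane
  haveI hfin : Finite ↥(Wrun p s0 n) := (wrun_finite p s0 n).to_subtype
  set tsub : TopologicalSpace ↥(Wrun p s0 n) :=
    TopologicalSpace.induced Subtype.val khalPlane with htsub
  -- clamp function
  let e : ℤ → ℤ → ℤ := fun t k => max 0 (min t (min k (n - 1)))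
  have he_bounds : ∀ t k, 0 ≤ e t k ∧ e t k < n := by
    intro t k
    simp only [e]
    omega
  let rfun : ℤ → ↥(Wrun p s0 n) → ↥(Wrun p s0 n) := fun k z =>
    ⟨cyc p (s0 + e (widx p s0 n z.val) k),
      wrun_mem (he_bounds _ k).1 (he_bounds _ k).2⟩
  have hval : ∀ (k : ℤ) z, (rfun k z).val = cyc p (s0 + e (widx p s0 n z.val) k) :=
    fun _ _ => rfl
  -- continuity
  have hcont : ∀ k : ℤ, @Continuous _ _ tsub tsub (rfun k) := by
    intro k
    apply continuous_of_specLE_mono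
    intro z z' hle
    obtain ⟨ht0, htn, ht⟩ := widx_spec z.2
    obtain ⟨ht0', htn', ht'⟩ := widx_spec z'.2
    set tz := widx p s0 n z.val
    set tz' := widx p s0 n z'.val
    have hmem : z.val ∈ minOpenNhd khalPlane z'.val := by
      have h2 := hle (mem_minOpenNhd_self tsub z)
      rw [minOpenNhd_induced] at h2
      exact h2
    have hspec : specLE khalPlane z.val z'.val :=
      specLE_of_mem_minOpenNhd (isOpen_minOpenNhd_khalPlane _) hmem
    have hmem' : cyc p (s0 + tz) ∈ minOpenNhd khalPlane (cyc p (s0 + tz')) := by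
      rw [ht, ht']; exact hmem
    have hmod := cyc_minOpen_mem hpp hmem'
    have hdt : tz = tz' ∨ tz = tz' + 1 ∨ tz = tz' - 1 := by omega
    have hcase : e tz k = e tz' k ∨ (e tz k = tz ∧ e tz' k = tz') := by
      simp only [e]; omega
    rcases hcase with hc | ⟨hc1, hc2⟩
    · have : rfun k z = rfun k z' := Subtype.ext (by rw [hval, hval, hc])
      rw [this]
      exact specLE_refl tsub _
    · apply specLE_induced_of
      rw [hval, hval, hc1, hc2, ht, ht']
      exact hspec
  let R : ℤ → @ContinuousMap _ _ tsub tsub := fun k => ⟨rfun k, hcont k⟩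
  -- step homotopies
  have hstep : ∀ k : ℤ, @ContinuousMap.Homotopic _ _ tsub tsub (R k) (R (k + 1)) := by
    intro k
    have hptw : ∀ z : ↥(Wrun p s0 n), (e (widx p s0 n z.val) k = e (widx p s0 n z.val) (k + 1)) ∨
        (e (widx p s0 n z.val) k = k ∧ e (widx p s0 n z.val) (k + 1) = k + 1 ∧
          0 ≤ k ∧ k + 1 ≤ n - 1) := by
      intro z
      obtain ⟨ht0, htn, _⟩ := widx_spec z.2
      simp only [e]; omega
    rcases cyc_consec hpp (s0 + k) with hd | hd
    · apply homotopic_of_specLE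
      intro z
      rcases hptw z with hc | ⟨hc1, hc2, _, _⟩
      · have : rfun k z = rfun (k+1) z := Subtype.ext (by rw [hval, hval, hc])
        show specLE tsub (rfun k z) (rfun (k+1) z)
        rw [this]; exact specLE_refl tsub _
      · show specLE tsub (rfun k z) (rfun (k+1) z)
        apply specLE_induced_of
        rw [hval, hval, hc1, hc2]
        rw [show s0 + (k + 1) = s0 + k + 1 by ring]
        exact hd
    · apply ContinuousMap.Homotopic.symm
      apply homotopic_of_specLE
      intro z
      rcases hptw z with hc | ⟨hc1, hc2, _, _⟩
      · have : rfun k z = rfun (k+1) z := Subtype.ext (by rw [hval, hval, hc])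
        show specLE tsub (rfun (k+1) z) (rfun k z)
        rw [this]; exact specLE_refl tsub _
      · show specLE tsub (rfun (k+1) z) (rfun k z)
        apply specLE_induced_of
        rw [hval, hval, hc1, hc2]
        rw [show s0 + (k + 1) = s0 + k + 1 by ring]
        exact hd
  have hchain : ∀ m : ℕ, @ContinuousMap.Homotopic _ _ tsub tsub (R 0) (R m) := by
    intro m
    induction m with
    | zero => exact ContinuousMap.Homotopic.refl _
    | succ m ih =>
      have := ih.trans (hstep m)
      rwa [show ((m : ℤ) + 1) = ((m + 1 : ℕ) : ℤ) by push_cast; ring] at this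
  have hid : R (n - 1) = @ContinuousMap.id _ tsub := by
    apply ContinuousMap.ext
    intro z
    obtain ⟨ht0, htn, ht⟩ := widx_spec z.2
    apply Subtype.ext
    show cyc p (s0 + e (widx p s0 n z.val) (n-1)) = z.val
    have : e (widx p s0 n z.val) (n-1) = widx p s0 n z.val := by
      simp only [e]; omega
    rw [this, ht]
  have hpt : cyc p (s0 + 0) ∈ Wrun p s0 n := wrun_mem le_rfl (by omega)
  have hconst : R 0 = @ContinuousMap.const _ _ tsub tsub ⟨cyc p (s0 + 0), hpt⟩ := by
    apply ContinuousMap.ext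
    intro z
    obtain ⟨ht0, htn, ht⟩ := widx_spec z.2
    apply Subtype.ext
    show cyc p (s0 + e (widx p s0 n z.val) 0) = cyc p (s0 + 0)
    have : e (widx p s0 n z.val) 0 = 0 := by
      simp only [e]; omega
    rw [this]
  rw [@contractible_iff_id_nullhomotopic _ tsub]
  refine ⟨⟨cyc p (s0 + 0), hpt⟩, ?_⟩
  have hfinal := hchain (n - 1).toNat
  rw [show (((n-1).toNat : ℕ) : ℤ) = n - 1 by omega] at hfinal
  rw [← hid, ← hconst]
  exact hfinal.symm

end Cots
section JInt

theorem jInterior_subset {J : Set (ℤ × ℤ)} : jInterior J ⊆ Jᶜ := by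
  letI : TopologicalSpace (ℤ × ℤ) := khalPlane
  rintro q ⟨S, hS, hq⟩
  obtain ⟨r, hrJ, rfl, hfin⟩ := hS
  exact connectedComponentIn_subset _ _ hq

theorem mem_jInterior_of_adj {J : Set (ℤ × ℤ)} {p q : ℤ × ℤ} (hp : p ∈ jInterior J)
    (hq : Adjacent khalPlane p q) (hqJ : q ∉ J) : q ∈ jInterior J := by
  letI : TopologicalSpace (ℤ × ℤ) := khalPlane
  obtain ⟨S, hS, hpS⟩ := hp
  obtain ⟨r, hrJ, rfl, hfin⟩ := hS
  have hpJ : p ∉ J := connectedComponentIn_subset _ _ hpS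
  have hpair : IsPreconnected {p, q} := isPreconnected_pair hq.2
  have hpairsub : ({p, q} : Set (ℤ × ℤ)) ⊆ Jᶜ := by
    rintro x (rfl | rfl)
    · exact hpJ
    · exact hqJ
  have hsub2 : ({p, q} : Set (ℤ × ℤ)) ⊆ connectedComponentIn Jᶜ p :=
    hpair.subset_connectedComponentIn (Or.inl rfl) hpairsub
  have hcomp : connectedComponentIn Jᶜ p = connectedComponentIn Jᶜ r :=
    (connectedComponentIn_eq hpS).symm
  exact ⟨connectedComponentIn Jᶜ r, ⟨r, hrJ, rfl, hfin⟩, by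
    rw [← hcomp]; exact hsub2 (Or.inr rfl)⟩

theorem adj_inter_jInterior {J : Set (ℤ × ℤ)} {p : ℤ × ℤ} (hp : p ∈ jInterior J) :
    adjSet khalPlane p ∩ jInterior J = adjSet khalPlane p \ J := by
  ext q
  constructor
  · rintro ⟨hq1, hq2⟩
    exact ⟨hq1, fun hc => (jInterior_subset hq2) hc⟩
  · rintro ⟨hq1, hq2⟩
    exact ⟨hq1, mem_jInterior_of_adj hp hq1 hq2⟩

theorem isPurePt_iff {p : ℤ × ℤ} : IsPurePt p ↔ p.1 % 2 = p.2 % 2 := by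
  rw [IsPurePt, Int.even_iff, Int.even_iff, Int.odd_iff, Int.odd_iff]
  omega

end JInt

section Mixed

theorem adjSet_mixed {p : ℤ × ℤ} (h : p.1 % 2 ≠ p.2 % 2) :
    adjSet khalPlane p =
      {(p.1 - 1, p.2), (p.1 + 1, p.2), (p.1, p.2 - 1), (p.1, p.2 + 1)} := by
  ext q
  rw [mem_adjSet_iff]
  simp only [lineLE, Set.mem_insert_iff, Set.mem_singleton_iff, Prod.ext_iff]
  constructor
  · rintro ⟨h1, h2⟩
    omega
  · intro h1
    constructor
    · omega
    · omega

theorem minOpen_punct_mixed_eo {p : ℤ × ℤ} (h1 : p.1 % 2 = 0) (h2 : p.2 % 2 ≠ 0) :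
    minOpenNhd khalPlane p \ {p} = {(p.1 - 1, p.2), (p.1 + 1, p.2)} := by
  ext q
  have he1 : Even p.1 := Int.even_iff.2 h1
  have ho2 : Odd p.2 := Int.odd_iff.2 (by omega)
  rw [Set.mem_diff, minOpenNhd_khalPlane, minOpenNhd_khal_even he1, minOpenNhd_khal_odd ho2]
  simp only [Set.mem_prod, Set.mem_insert_iff, Set.mem_singleton_iff, Prod.ext_iff]
  constructor
  · rintro ⟨⟨ha, hb⟩, hc⟩
    omega
  · intro hq
    refine ⟨⟨by omega, by omega⟩, by omega⟩

theorem closure_punct_mixed_eo {p : ℤ × ℤ} (h1 : p.1 % 2 = 0) (h2 : p.2 % 2 ≠ 0) :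
    @closure _ khalPlane {p} \ {p} = {(p.1, p.2 - 1), (p.1, p.2 + 1)} := by
  ext q
  rw [Set.mem_diff, mem_closure_singleton_khalPlane, specLE_khalPlane_iff]
  simp only [lineLE, Set.mem_insert_iff, Set.mem_singleton_iff, Prod.ext_iff]
  constructor
  · rintro ⟨⟨ha, hb⟩, hc⟩
    omega
  · intro hq
    refine ⟨⟨by omega, by omega⟩, by omega⟩

theorem minOpen_punct_mixed_oe {p : ℤ × ℤ} (h1 : p.1 % 2 ≠ 0) (h2 : p.2 % 2 = 0) :
    minOpenNhd khalPlane p \ {p} = {(p.1, p.2 - 1), (p.1, p.2 + 1)} := by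
  ext q
  have ho1 : Odd p.1 := Int.odd_iff.2 (by omega)
  have he2 : Even p.2 := Int.even_iff.2 h2
  rw [Set.mem_diff, minOpenNhd_khalPlane, minOpenNhd_khal_odd ho1, minOpenNhd_khal_even he2]
  simp only [Set.mem_prod, Set.mem_insert_iff, Set.mem_singleton_iff, Prod.ext_iff]
  constructor
  · rintro ⟨⟨ha, hb⟩, hc⟩
    omega
  · intro hq
    refine ⟨⟨by omega, by omega⟩, by omega⟩

theorem closure_punct_mixed_oe {p : ℤ × ℤ} (h1 : p.1 % 2 ≠ 0) (h2 : p.2 % 2 = 0) :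
    @closure _ khalPlane {p} \ {p} = {(p.1 - 1, p.2), (p.1 + 1, p.2)} := by
  ext q
  rw [Set.mem_diff, mem_closure_singleton_khalPlane, specLE_khalPlane_iff]
  simp only [lineLE, Set.mem_insert_iff, Set.mem_singleton_iff, Prod.ext_iff]
  constructor
  · rintro ⟨⟨ha, hb⟩, hc⟩
    omega
  · intro hq
    refine ⟨⟨by omega, by omega⟩, by omega⟩

/-- in the mixed case, one antipodal pair has exactly one point in `J`. -/
theorem mixed_good_pair {p : ℤ × ℤ} (h : p.1 % 2 ≠ p.2 % 2) {J : Set (ℤ × ℤ)}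
    (hsub : adjSet khalPlane p ∩ J ⊂ adjSet khalPlane p)
    (hne : (adjSet khalPlane p ∩ J).Nonempty)
    (hconn : @IsConnected _ khalPlane (adjSet khalPlane p ∩ J)) :
    ((p.1 - 1, p.2) ∈ J ↔ (p.1 + 1, p.2) ∉ J) ∨
      ((p.1, p.2 - 1) ∈ J ↔ (p.1, p.2 + 1) ∉ J) := by
  letI : TopologicalSpace (ℤ × ℤ) := khalPlane
  set L : ℤ × ℤ := (p.1 - 1, p.2) with hLdef
  set R : ℤ × ℤ := (p.1 + 1, p.2) with hRdef
  set D : ℤ × ℤ := (p.1, p.2 - 1) with hDdef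
  set U : ℤ × ℤ := (p.1, p.2 + 1) with hUdef
  have hA := adjSet_mixed h
  by_cases hL : L ∈ J <;> by_cases hR : R ∈ J <;> by_cases hD : D ∈ J <;> by_cases hU : U ∈ J
  all_goals try tauto
  · -- all four in J : contradicts properness
    exfalso
    apply hsub.2
    intro x hx
    rw [hA] at hx
    rcases hx with rfl | rfl | rfl | rfl
    · exact ⟨by rw [hA]; simp, hL⟩
    · exact ⟨by rw [hA]; simp, hR⟩
    · exact ⟨by rw [hA]; simp, hD⟩
    · exact ⟨by rw [hA]; simp, hU⟩
  · -- L, R ∈ J, D, U ∉ J : disconnection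
    exfalso
    have hcover : adjSet khalPlane p ∩ J ⊆ minOpenNhd khalPlane L ∪ minOpenNhd khalPlane R := by
      rintro x ⟨hx1, hx2⟩
      rw [hA] at hx1
      rcases hx1 with rfl | rfl | rfl | rfl
      · exact Or.inl (mem_minOpenNhd_self _ _)
      · exact Or.inr (mem_minOpenNhd_self _ _)
      · exact absurd hx2 hD
      · exact absurd hx2 hU
    obtain ⟨x, hxK, hx1, hx2⟩ := hconn.2 _ _ (isOpen_minOpenNhd_khalPlane L)
      (isOpen_minOpenNhd_khalPlane R) hcover
      ⟨L, ⟨by rw [hA]; simp [hLdef], hL⟩, mem_minOpenNhd_self _ _⟩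
      ⟨R, ⟨by rw [hA]; simp [hRdef], hR⟩, mem_minOpenNhd_self _ _⟩
    have hx : x = L ∨ x = R := by
      have := hxK.1
      rw [hA] at this
      rcases this with rfl | rfl | rfl | rfl
      · exact Or.inl rfl
      · exact Or.inr rfl
      · exact absurd hxK.2 hD
      · exact absurd hxK.2 hU
    have hm1 := specLE_khalPlane_iff.1 (mem_minOpenNhd_khalPlane_iff.1 hx1)
    have hm2 := specLE_khalPlane_iff.1 (mem_minOpenNhd_khalPlane_iff.1 hx2)
    simp only [lineLE, hLdef, hRdef] at hm1 hm2
    rcases hx with rfl | rfl <;> simp only [hLdef, hRdef] at hm1 hm2 <;> omega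
  · -- D, U ∈ J, L, R ∉ J : disconnection
    exfalso
    have hcover : adjSet khalPlane p ∩ J ⊆ minOpenNhd khalPlane D ∪ minOpenNhd khalPlane U := by
      rintro x ⟨hx1, hx2⟩
      rw [hA] at hx1
      rcases hx1 with rfl | rfl | rfl | rfl
      · exact absurd hx2 hL
      · exact absurd hx2 hR
      · exact Or.inl (mem_minOpenNhd_self _ _)
      · exact Or.inr (mem_minOpenNhd_self _ _)
    obtain ⟨x, hxK, hx1, hx2⟩ := hconn.2 _ _ (isOpen_minOpenNhd_khalPlane D)
      (isOpen_minOpenNhd_khalPlane U) hcover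
      ⟨D, ⟨by rw [hA]; simp [hDdef], hD⟩, mem_minOpenNhd_self _ _⟩
      ⟨U, ⟨by rw [hA]; simp [hUdef], hU⟩, mem_minOpenNhd_self _ _⟩
    have hx : x = D ∨ x = U := by
      have := hxK.1
      rw [hA] at this
      rcases this with rfl | rfl | rfl | rfl
      · exact absurd hxK.2 hL
      · exact absurd hxK.2 hR
      · exact Or.inl rfl
      · exact Or.inr rfl
    have hm1 := specLE_khalPlane_iff.1 (mem_minOpenNhd_khalPlane_iff.1 hx1)
    have hm2 := specLE_khalPlane_iff.1 (mem_minOpenNhd_khalPlane_iff.1 hx2)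
    simp only [lineLE, hDdef, hUdef] at hm1 hm2
    rcases hx with rfl | rfl <;> simp only [hDdef, hUdef] at hm1 hm2 <;> omega
  · -- none in J : contradicts nonemptiness
    exfalso
    obtain ⟨x, hx1, hx2⟩ := hne
    rw [hA] at hx1
    rcases hx1 with rfl | rfl | rfl | rfl
    · exact hL hx2
    · exact hR hx2
    · exact hD hx2
    · exact hU hx2

theorem pair_inter_int {J : Set (ℤ × ℤ)} {p a b : ℤ × ℤ} (hp : p ∈ jInterior J)
    (hb : b ∈ adjSet khalPlane p) (haJ : a ∈ J) (hbJ : b ∉ J) :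
    ({a, b} : Set (ℤ × ℤ)) ∩ jInterior J = {b} := by
  ext x
  constructor
  · rintro ⟨(rfl | rfl), hx2⟩
    · exact absurd haJ (jInterior_subset hx2)
    · rfl
  · rintro rfl
    exact ⟨Or.inr rfl, mem_jInterior_of_adj hp hb hbJ⟩

theorem contractible_singleton (x : ℤ × ℤ) :
    @ContractibleSpace ↥({x} : Set (ℤ × ℤ))
      (TopologicalSpace.induced Subtype.val khalPlane) := by
  haveI : Subsingleton ↥({x} : Set (ℤ × ℤ)) := by
    constructor
    rintro ⟨a, ha⟩ ⟨b, hb⟩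
    rcases ha with rfl
    rcases hb with rfl
    rfl
  exact contractible_of_subsingleton _ ⟨x, rfl⟩

end Mixed
section Glue

theorem pure_W_is_run {p : ℤ × ℤ} (hpp : p.1 % 2 = p.2 % 2) {J : Set (ℤ × ℤ)}
    (hsub : adjSet khalPlane p ∩ J ⊂ adjSet khalPlane p)
    (hne : (adjSet khalPlane p ∩ J).Nonempty)
    (hconn : @IsConnected _ khalPlane (adjSet khalPlane p ∩ J)) :
    ∃ s0 n : ℤ, 1 ≤ n ∧ n ≤ 7 ∧ adjSet khalPlane p \ J = Wrun p s0 n := by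
  classical
  have hA := adjSet_pure hpp
  set K := adjSet khalPlane p ∩ J with hK
  -- a point of the cycle not in K
  obtain ⟨x0, hx0A, hx0K⟩ := Set.exists_of_ssubset hsub
  obtain ⟨m, hm⟩ := (hA ▸ hx0A)
  have hmK : cyc p m ∉ K := by rw [hm]; exact hx0K
  -- K lives on the run of length 7 after m
  have hKrun : K ⊆ Wrun p (m + 1) 7 := by
    intro x hx
    have hxA : x ∈ Set.range (cyc p) := hA ▸ hx.1
    obtain ⟨s, rfl⟩ := hxA
    set t := (s - (m + 1)) % 8 with ht
    have ht0 : 0 ≤ t := by omega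
    have ht8 : t < 8 := by omega
    have hcong : cyc p s = cyc p (m + 1 + t) := cyc_congr p (by omega)
    have ht7 : t ≠ 7 := by
      intro hc
      apply hmK
      have : cyc p (m + 1 + t) = cyc p m := cyc_congr p (by omega)
      rw [hcong, this] at hx
      exact hx
    exact ⟨m + 1 + t, Set.mem_Ico.2 ⟨by omega, by omega⟩, hcong.symm⟩
  -- index set of K
  set SP : ℤ → Prop := fun t => 0 ≤ t ∧ t < 7 ∧ cyc p (m + 1 + t) ∈ K with hSP
  have hSPne : ∃ t, SP t := by
    obtain ⟨x, hx⟩ := hne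
    obtain ⟨t, ht0, ht7, htx⟩ := wrun_index (hKrun hx)
    exact ⟨t, ht0, ht7, by rw [htx]; exact hx⟩
  have hbddlo : ∃ b : ℤ, ∀ z, SP z → b ≤ z := ⟨0, fun z hz => hz.1⟩
  have hbddhi : ∃ b : ℤ, ∀ z, SP z → z ≤ b := ⟨7, fun z hz => le_of_lt hz.2.1⟩
  obtain ⟨lo, hloSP, hlo⟩ := Int.exists_least_of_bdd hbddlo hSPne
  obtain ⟨hi, hhiSP, hhi⟩ := Int.exists_greatest_of_bdd hbddhi hSPne
  have hlohi : lo ≤ hi := hhi lo hloSP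
  -- no gaps
  have hint : ∀ t, lo ≤ t → t ≤ hi → SP t := by
    intro t h1 h2
    by_contra hc
    have ht0 : 0 ≤ t := le_trans hloSP.1 h1
    have ht7 : t < 7 := lt_of_le_of_lt h2 hhiSP.2.1
    have htK : cyc p (m + 1 + t) ∉ K := fun hk => hc ⟨ht0, ht7, hk⟩
    have hlt : lo < t := by
      rcases lt_or_eq_of_le h1 with h | h
      · exact h
      · exact absurd (h ▸ hloSP) hc
    have hgt : t < hi := by
      rcases lt_or_eq_of_le h2 with h | h
      · exact h
      · exact absurd (h ▸ hhiSP) hc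
    exact run_separated hpp (le_refl 7) hconn.2 hKrun hloSP.1 hlt hgt hhiSP.2.1
      hloSP.2.2 hhiSP.2.2 htK
  -- K is exactly the interval [lo, hi]
  have hKeq : ∀ s : ℤ, cyc p s ∈ K ↔ ∃ t, lo ≤ t ∧ t ≤ hi ∧ (s - (m + 1 + t)) % 8 = 0 := by
    intro s
    constructor
    · intro hs
      obtain ⟨t, ht0, ht7, hts⟩ := wrun_index (hKrun hs)
      have hSPt : SP t := ⟨ht0, ht7, by rw [hts]; exact hs⟩
      have heq : (m + 1 + t) % 8 = s % 8 := cyc_inj p hts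
      exact ⟨t, hlo t hSPt, hhi t hSPt, by omega⟩
    · rintro ⟨t, h1, h2, h3⟩
      have hSPt : SP t := hint t h1 h2
      have : cyc p s = cyc p (m + 1 + t) := cyc_congr p (by omega)
      rw [this]
      exact hSPt.2.2
  refine ⟨m + hi + 2, 7 - hi + lo, by omega, by omega, ?_⟩
  have hAJ : adjSet khalPlane p \ J = Set.range (cyc p) \ K := by
    rw [hK, ← hA]
    ext q
    constructor
    · rintro ⟨hq1, hq2⟩
      exact ⟨hq1, fun hc => hq2 hc.2⟩
    · rintro ⟨hq1, hq2⟩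
      exact ⟨hq1, fun hc => hq2 ⟨hq1, hc⟩⟩
  rw [hAJ]
  ext q
  constructor
  · rintro ⟨⟨s, rfl⟩, hqK⟩
    set r := (s - m) % 8 with hr
    have hr0 : 0 ≤ r := by omega
    have hr8 : r < 8 := by omega
    have hcong : cyc p s = cyc p (m + r) := cyc_congr p (by omega)
    have hnotin : ¬(lo + 1 ≤ r ∧ r ≤ hi + 1) := by
      rintro ⟨ha, hb⟩
      apply hqK
      rw [hKeq]
      exact ⟨r - 1, by omega, by omega, by omega⟩
    rcases le_or_gt r lo with hcase | hcase
    · -- r ∈ [0, lo] : use index m + r + 8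
      refine ⟨m + r + 8, Set.mem_Ico.2 ⟨by omega, by omega⟩, ?_⟩
      rw [show cyc p (m + r + 8) = cyc p s from cyc_congr p (by omega)]
    · -- r ∈ [hi+2, 7]
      have hge : hi + 2 ≤ r := by omega
      refine ⟨m + r, Set.mem_Ico.2 ⟨by omega, by omega⟩, ?_⟩
      rw [show cyc p (m + r) = cyc p s from cyc_congr p (by omega)]
  · rintro ⟨s, hs, rfl⟩
    rw [Set.mem_Ico] at hs
    refine ⟨⟨s, rfl⟩, ?_⟩
    intro hc
    rw [hKeq] at hc
    obtain ⟨t, h1, h2, h3⟩ := hc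
    have hlo0 : 0 ≤ lo := hloSP.1
    have hhi7 : hi < 7 := hhiSP.2.1
    omega

theorem wrun_isCOTSArc {p : ℤ × ℤ} (hpp : p.1 % 2 = p.2 % 2) {s0 n : ℤ}
    (h1 : 1 ≤ n) (h7 : n ≤ 7) : IsCOTSArc khalPlane (Wrun p s0 n) := by
  letI : TopologicalSpace (ℤ × ℤ) := khalPlane
  exact ⟨↥(Wrun p s0 n), TopologicalSpace.induced Subtype.val khalPlane,
    (wrun_finite p s0 n).to_subtype, wrun_isCOTS hpp h1 h7, Subtype.val,
    Topology.IsEmbedding.subtypeVal, Subtype.range_val⟩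

end Glue

/-- If `p` is interior to a Jordan curve `J` and `A(p) ∩ J` is a proper nonempty
connected subset of `A(p)`, then `p` is a weak point of `int(J)`; if moreover `p` is
pure then `A(p) \ J` is a COTS-arc, hence contractible. -/
theorem stmt18 (J : Set (ℤ × ℤ)) (hJ : IsJordanCurve khalPlane J) (p : ℤ × ℤ)
    (hp : p ∈ jInterior J)
    (hsub : adjSet khalPlane p ∩ J ⊂ adjSet khalPlane p)
    (hne : (adjSet khalPlane p ∩ J).Nonempty)
    (hconn : @IsConnected _ khalPlane (adjSet khalPlane p ∩ J)) :
    IsWeakPt (jInterior J) p ∧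
      (IsPurePt p →
        IsCOTSArc khalPlane (adjSet khalPlane p \ J) ∧
        @ContractibleSpace (↥(adjSet khalPlane p \ J))
          (TopologicalSpace.induced Subtype.val khalPlane)) := by
  have hAint := adj_inter_jInterior hp
  rcases eq_or_ne (p.1 % 2) (p.2 % 2) with hpp | hpp
  · -- pure case
    obtain ⟨s0, n, h1, h7, hW⟩ := pure_W_is_run hpp hsub hne hconn
    constructor
    · unfold IsWeakPt
      rcases eq_or_ne (p.1 % 2) 0 with he | he
      · left
        rw [minOpen_punct_pure_even he (by omega), hAint, hW]
        exact wrun_contractible hpp h1 h7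
      · right
        rw [closure_punct_pure_odd he (by omega), hAint, hW]
        exact wrun_contractible hpp h1 h7
    · intro _
      rw [hW]
      exact ⟨wrun_isCOTSArc hpp h1 h7, wrun_contractible hpp h1 h7⟩
  · -- mixed case
    have hgp := mixed_good_pair hpp hsub hne hconn
    have hAm := adjSet_mixed hpp
    have hLA : (p.1 - 1, p.2) ∈ adjSet khalPlane p := by rw [hAm]; simp
    have hRA : (p.1 + 1, p.2) ∈ adjSet khalPlane p := by rw [hAm]; simp
    have hDA : (p.1, p.2 - 1) ∈ adjSet khalPlane p := by rw [hAm]; simp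
    have hUA : (p.1, p.2 + 1) ∈ adjSet khalPlane p := by rw [hAm]; simp
    constructor
    · unfold IsWeakPt
      rcases eq_or_ne (p.1 % 2) 0 with he | he
      · -- p.1 even, p.2 odd
        rcases hgp with hLR | hDU
        · left
          rw [minOpen_punct_mixed_eo he (by omega)]
          by_cases hL : (p.1 - 1, p.2) ∈ J
          · rw [pair_inter_int hp hRA hL (hLR.1 hL)]
            exact contractible_singleton _
          · have hR : (p.1 + 1, p.2) ∈ J := by
              by_contra hc; exact hL (hLR.2 hc)
            rw [Set.pair_comm, pair_inter_int hp hLA hR hL]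
            exact contractible_singleton _
        · right
          rw [closure_punct_mixed_eo he (by omega)]
          by_cases hD : (p.1, p.2 - 1) ∈ J
          · rw [pair_inter_int hp hUA hD (hDU.1 hD)]
            exact contractible_singleton _
          · have hU : (p.1, p.2 + 1) ∈ J := by
              by_contra hc; exact hD (hDU.2 hc)
            rw [Set.pair_comm, pair_inter_int hp hDA hU hD]
            exact contractible_singleton _
      · -- p.1 odd, p.2 even
        rcases hgp with hLR | hDU
        · right
          rw [closure_punct_mixed_oe he (by omega)]
          by_cases hL : (p.1 - 1, p.2) ∈ J
          · rw [pair_inter_int hp hRA hL (hLR.1 hL)]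
            exact contractible_singleton _
          · have hR : (p.1 + 1, p.2) ∈ J := by
              by_contra hc; exact hL (hLR.2 hc)
            rw [Set.pair_comm, pair_inter_int hp hLA hR hL]
            exact contractible_singleton _
        · left
          rw [minOpen_punct_mixed_oe he (by omega)]
          by_cases hD : (p.1, p.2 - 1) ∈ J
          · rw [pair_inter_int hp hUA hD (hDU.1 hD)]
            exact contractible_singleton _
          · have hU : (p.1, p.2 + 1) ∈ J := by
              by_contra hc; exact hD (hDU.2 hc)
            rw [Set.pair_comm, pair_inter_int hp hDA hU hD]
            exact contractible_singleton _
    · intro hpure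
      exact absurd (isPurePt_iff.1 hpure) hpp
end
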